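/- arXiv:1503.03703 — 10 statements merged into one kernel-verified Lean document; each statement's English description precedes it below -/
import Mathlib

section
/- Let x⋆ ∈ Argmin(F + R), so that −∇F(x⋆) ∈ ∂R(x⋆). Define φ_k = ½‖x_k − x⋆‖², E_k = ½‖x_k − x_{k−1}‖², μ_k = 1 − γ_k/(2β) (which is positive since γ_k < 2β), ν_k = a_k − γ_k b_k/(2β), and v_k = x_{k+1} − x_k − (ν_k/μ_k)(x_k − x_{k−1}). Then for every k, φ_{k+1} − φ_k − a_k(φ_k − φ_{k−1}) ≤ −(μ_k/2)‖v_k‖² + (a_k + ν_k²/μ_k + γ_k b_k²/(2β))·E_k. (Key Lyapunov estimate (A.10) in the proof of Theorem 2.1.) -/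
open Filter Topology

/-- The subdifferential of a convex extended-real-valued function. -/
noncomputable def subdiff {n : ℕ} (R : EuclideanSpace ℝ (Fin n) → EReal)
    (x : EuclideanSpace ℝ (Fin n)) : Set (EuclideanSpace ℝ (Fin n)) :=
  {g | ∀ y, R x + ((inner ℝ g (y - x) : ℝ) : EReal) ≤ R y}

private lemma ifb_aux_e2 (G β N Δw Δd wd W D B : ℝ) (hβ : β ≠ 0) :
    G / (4*β) * ((2*β)^2 * N + 2 * ((2*β) * (Δw - B * Δd))
          + (W - 2 * (B * wd) + B^2 * D))
        = G * (β * N) + G * Δw - G * (B * Δd)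
          + G / (4*β) * W - G / (2*β) * (B * wd) + G / (4*β) * (B^2 * D) := by
  field_simp
  ring

private lemma ifb_aux_key (A e wd W D mu nu : ℝ) (hμ : mu ≠ 0) :
    -(mu/2) * (W - 2 * (nu/mu * wd) + (nu/mu)^2 * D)
        + (A + nu^2/mu + e) * ((1/2) * D)
      = -(mu/2) * W + nu * wd + (A/2) * D + (e/2) * D := by
  field_simp
  ring

/-- **Key Lyapunov estimate (A.10)** from the proof of Theorem 2.1: with
`φ_k = ½‖x_k − x⋆‖²`, `E_k = ½‖x_k − x_{k−1}‖²`, `μ_k = 1 − γ_k/(2β)`,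
`ν_k = a_k − γ_k b_k/(2β)` and `v_k = x_{k+1} − x_k − (ν_k/μ_k)(x_k − x_{k−1})`,
one has `φ_{k+1} − φ_k − a_k(φ_k − φ_{k−1}) ≤ −(μ_k/2)‖v_k‖² + (a_k + ν_k²/μ_k + γ_k b_k²/(2β)) E_k`. -/
theorem ifb_lyapunov_estimate {n : ℕ}
    (R : EuclideanSpace ℝ (Fin n) → EReal)
    (F : EuclideanSpace ℝ (Fin n) → ℝ)
    (Fgrad : EuclideanSpace ℝ (Fin n) → EuclideanSpace ℝ (Fin n))
    (β : ℝ) (hβ : 0 < β)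
    -- R is proper, convex and lower semicontinuous
    (hRbot : ∀ x, R x ≠ ⊥) (hRtop : ∃ x, R x ≠ ⊤)
    (hRconv : ∀ x y : EuclideanSpace ℝ (Fin n), ∀ t : ℝ, 0 ≤ t → t ≤ 1 →
      R (t • x + (1 - t) • y) ≤ (t : EReal) * R x + ((1 - t : ℝ) : EReal) * R y)
    (hRlsc : LowerSemicontinuous R)
    -- F is differentiable with β-cocoercive gradient
    (hFgrad : ∀ x, HasGradientAt F (Fgrad x) x)
    (hcoco : ∀ u v, β * ‖Fgrad u - Fgrad v‖ ^ 2 ≤ (inner ℝ (Fgrad u - Fgrad v) (u - v) : ℝ))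
    -- parameters
    (a b γ : ℕ → ℝ)
    (ha : ∀ k, a k ∈ Set.Icc (0 : ℝ) 1)
    (hb : ∀ k, b k ∈ Set.Icc (0 : ℝ) 1)
    (hγ : ∀ k, γ k ∈ Set.Ioo (0 : ℝ) (2 * β))
    -- a global minimizer x⋆ of F + R, i.e. −∇F(x⋆) ∈ ∂R(x⋆)
    (xstar : EuclideanSpace ℝ (Fin n))
    (hstar : -Fgrad xstar ∈ subdiff R xstar)
    -- the iFB iterates (with the convention `x (0 - 1) = x 0`, i.e. x₋₁ = x₀)
    (x : ℕ → EuclideanSpace ℝ (Fin n))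
    (hiter : ∀ k, ∃ g ∈ subdiff R (x (k + 1)),
      (x k + a k • (x k - x (k - 1))) - γ k • Fgrad (x k + b k • (x k - x (k - 1)))
        - x (k + 1) = γ k • g) :
    ∀ k : ℕ,
      (1 / 2) * ‖x (k + 1) - xstar‖ ^ 2 - (1 / 2) * ‖x k - xstar‖ ^ 2
        - a k * ((1 / 2) * ‖x k - xstar‖ ^ 2 - (1 / 2) * ‖x (k - 1) - xstar‖ ^ 2)
      ≤ -((1 - γ k / (2 * β)) / 2) *
            ‖x (k + 1) - x k -
              ((a k - γ k * b k / (2 * β)) / (1 - γ k / (2 * β))) • (x k - x (k - 1))‖ ^ 2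
        + (a k + (a k - γ k * b k / (2 * β)) ^ 2 / (1 - γ k / (2 * β))
            + γ k * b k ^ 2 / (2 * β)) * ((1 / 2) * ‖x k - x (k - 1)‖ ^ 2) := by
  intro k
  obtain ⟨g, hg, heq⟩ := hiter k
  obtain ⟨y0, hy0⟩ := hRtop
  simp only [subdiff, Set.mem_setOf_eq] at hg hstar
  set A := a k with hA_def
  set B := b k with hB_def
  set G := γ k with hG_def
  have hGpos : 0 < G := (hγ k).1
  have hGlt : G < 2 * β := (hγ k).2
  have hβ2 : (0:ℝ) < 2 * β := by linarith
  have hμpos : 0 < 1 - G / (2 * β) := by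
    rw [sub_pos, div_lt_one hβ2]; exact hGlt
  set z := x k - xstar with hz_def
  set d := x k - x (k - 1) with hd_def
  set w := x (k + 1) - x k with hw_def
  set yb := x k + B • d with hyb_def
  set Δ := Fgrad yb - Fgrad xstar with hΔ_def
  -- finiteness of R at the two points
  have hfin : ∀ (u gu : EuclideanSpace ℝ (Fin n)),
      (∀ y, R u + ((inner ℝ gu (y - u) : ℝ) : EReal) ≤ R y) → R u ≠ ⊤ := by
    intro u gu hgu hTop
    have h1 := hgu y0
    rw [hTop] at h1
    exact hy0 (top_le_iff.mp ((by exact rfl :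
      (⊤:EReal) + ((inner ℝ gu (y0 - u):ℝ):EReal) = ⊤) ▸ h1))
  obtain ⟨r1, hr1⟩ : ∃ r : ℝ, R (x (k + 1)) = (r : EReal) :=
    ⟨_, (EReal.coe_toReal (hfin _ g hg) (hRbot _)).symm⟩
  obtain ⟨r2, hr2⟩ : ∃ r : ℝ, R xstar = (r : EReal) :=
    ⟨_, (EReal.coe_toReal (hfin _ _ hstar) (hRbot _)).symm⟩
  have h1 := hg xstar
  have h2 := hstar (x (k + 1))
  rw [hr1, hr2, ← EReal.coe_add] at h1
  rw [hr2, hr1, ← EReal.coe_add] at h2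
  have h1' : r1 + (inner ℝ g (xstar - x (k + 1)) : ℝ) ≤ r2 := by exact_mod_cast h1
  have h2' : r2 + (inner ℝ (-Fgrad xstar) (x (k + 1) - xstar) : ℝ) ≤ r1 := by exact_mod_cast h2
  -- monotonicity
  have hM0 : (0:ℝ) ≤ inner ℝ (g + Fgrad xstar) (x (k + 1) - xstar) := by
    have e1 : (inner ℝ g (xstar - x (k + 1)) : ℝ) = -(inner ℝ g (x (k + 1) - xstar) : ℝ) := by
      rw [show xstar - x (k + 1) = -(x (k + 1) - xstar) by abel, inner_neg_right]
    have e2 : (inner ℝ (-Fgrad xstar) (x (k + 1) - xstar) : ℝ)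
        = -(inner ℝ (Fgrad xstar) (x (k + 1) - xstar) : ℝ) := by rw [inner_neg_left]
    rw [inner_add_left]
    rw [e1] at h1'
    rw [e2] at h2'
    linarith
  have hvec : G • g + G • Fgrad xstar = A • d - w - G • Δ := by
    rw [← heq, hΔ_def, hw_def]; module
  have hp : x (k + 1) - xstar = z + w := by rw [hz_def, hw_def]; abel
  have hA0 : (0:ℝ) ≤ inner ℝ (A • d - w - G • Δ) (z + w) := by
    rw [← hvec, ← hp]
    have e : (inner ℝ (G • g + G • Fgrad xstar) (x (k+1) - xstar) : ℝ)
        = G * inner ℝ (g + Fgrad xstar) (x (k+1) - xstar) := by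
      rw [← smul_add, real_inner_smul_left]
    rw [e]
    exact mul_nonneg hGpos.le hM0
  -- expanded facts
  have fact1 : (0:ℝ) ≤ A * inner ℝ d z + A * inner ℝ d w - inner ℝ w z - ‖w‖^2
      - G * inner ℝ Δ z - G * inner ℝ Δ w := by
    have e : (inner ℝ (A • d - w - G • Δ) (z + w) : ℝ)
        = A * inner ℝ d z + A * inner ℝ d w - inner ℝ w z - ‖w‖^2
          - G * inner ℝ Δ z - G * inner ℝ Δ w := by
      simp only [inner_sub_left, inner_add_right, real_inner_smul_left,
        real_inner_self_eq_norm_sq]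
      ring
    rw [e] at hA0
    exact hA0
  have hybz : yb - xstar = z + B • d := by rw [hyb_def, hz_def]; abel
  have fact2 : G * (β * ‖Δ‖^2) ≤ G * inner ℝ Δ z + G * (B * inner ℝ Δ d) := by
    have h := hcoco yb xstar
    rw [hybz] at h
    rw [inner_add_right, real_inner_smul_right] at h
    have h' := mul_le_mul_of_nonneg_left h hGpos.le
    linarith
  have fact3 : (0:ℝ) ≤ G * (β * ‖Δ‖^2) + G * inner ℝ Δ w - G * (B * inner ℝ Δ d)
      + G / (4*β) * ‖w‖^2 - G / (2*β) * (B * inner ℝ w d) + G / (4*β) * (B^2 * ‖d‖^2) := by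
    have hsq : (0:ℝ) ≤ ‖(2*β) • Δ + (w - B • d)‖^2 := by positivity
    have e : ‖(2*β) • Δ + (w - B • d)‖^2
        = (2*β)^2 * ‖Δ‖^2 + 2 * ((2*β) * ((inner ℝ Δ w : ℝ) - B * inner ℝ Δ d))
          + (‖w‖^2 - 2 * (B * inner ℝ w d) + B^2 * ‖d‖^2) := by
      rw [norm_add_sq_real, norm_sub_sq_real, real_inner_smul_left, inner_sub_right,
        real_inner_smul_right, real_inner_smul_right, norm_smul, norm_smul]
      simp only [Real.norm_eq_abs, abs_of_pos hβ2, mul_pow, sq_abs]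
    rw [e] at hsq
    have h := mul_nonneg (by positivity : (0:ℝ) ≤ G / (4*β)) hsq
    rw [ifb_aux_e2 G β (‖Δ‖^2) (inner ℝ Δ w) (inner ℝ Δ d) (inner ℝ w d) (‖w‖^2) (‖d‖^2) B
      hβ.ne'] at h
    exact h
  -- expand goal norms
  have hp2 : ‖x (k + 1) - xstar‖^2 = ‖z‖^2 + 2 * (inner ℝ w z : ℝ) + ‖w‖^2 := by
    rw [hp, norm_add_sq_real, real_inner_comm]
  have hm : x (k - 1) - xstar = z - d := by rw [hz_def, hd_def]; abel
  have hm2 : ‖x (k - 1) - xstar‖^2 = ‖z‖^2 - 2 * (inner ℝ d z : ℝ) + ‖d‖^2 := by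
    rw [hm, norm_sub_sq_real, real_inner_comm]
  set c : ℝ := (A - G * B / (2*β)) / (1 - G / (2*β)) with hc_def
  have hv2 : ‖w - c • d‖^2 = ‖w‖^2 - 2 * (c * (inner ℝ w d : ℝ)) + c^2 * ‖d‖^2 := by
    rw [norm_sub_sq_real, real_inner_smul_right, norm_smul]
    rw [Real.norm_eq_abs, mul_pow, sq_abs]
  have hidw : (inner ℝ d w : ℝ) = inner ℝ w d := real_inner_comm w d
  have keyeq := ifb_aux_key A (G * B^2/(2*β)) (inner ℝ w d : ℝ) (‖w‖^2) (‖d‖^2)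
    (1 - G/(2*β)) (A - G * B/(2*β)) hμpos.ne'
  rw [← hc_def] at keyeq
  rw [hp2, hm2, hv2]
  rw [hidw] at fact1
  ring_nf at fact1 fact2 fact3 keyeq ⊢
  linarith [fact1, fact2, fact3, keyeq]
end

section
/- For every k, the subdifferential residual of the iFB iterates satisfies dist(0, ∇F(x_{k+1}) + ∂R(x_{k+1})) ≤ (1/γ_k)·(3‖x_k − x_{k−1}‖ + ‖x_{k+1} − x_k‖). (Residual bound from the proof of Theorem 3.4.) -/
open Filter Topology

lemma nonexp_aux {n : ℕ} (γ β : ℝ) (hγ0 : 0 < γ) (hγβ : γ ≤ 2*β)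
    (u v Fu Fv : EuclideanSpace ℝ (Fin n))
    (hc : β * ‖Fu - Fv‖^2 ≤ (inner ℝ (Fu - Fv) (u - v) : ℝ)) :
    ‖(u - v) - γ • (Fu - Fv)‖ ≤ ‖u - v‖ := by
  have h2 : ‖(u-v) - γ•(Fu-Fv)‖^2 ≤ ‖u-v‖^2 := by
    rw [norm_sub_sq_real, real_inner_smul_right, norm_smul]
    have hsym : (inner ℝ (u-v) (Fu-Fv) : ℝ) = inner ℝ (Fu-Fv) (u-v) := real_inner_comm _ _
    rw [hsym, Real.norm_eq_abs, abs_of_pos hγ0]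
    nlinarith [mul_le_mul_of_nonneg_left hc hγ0.le, mul_nonneg (mul_nonneg (by linarith : (0:ℝ) ≤ 2*β - γ) hγ0.le) (sq_nonneg ‖Fu - Fv‖)]
  have := Real.sqrt_le_sqrt h2
  rwa [Real.sqrt_sq (norm_nonneg _), Real.sqrt_sq (norm_nonneg _)] at this

/-- **Residual bound** from the proof of Theorem 3.4:
`dist(0, ∇F(x_{k+1}) + ∂R(x_{k+1})) ≤ (1/γ_k)(3‖x_k − x_{k−1}‖ + ‖x_{k+1} − x_k‖)`. -/
theorem ifb_residual_bound {n : ℕ}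
    (R : EuclideanSpace ℝ (Fin n) → EReal)
    (F : EuclideanSpace ℝ (Fin n) → ℝ)
    (Fgrad : EuclideanSpace ℝ (Fin n) → EuclideanSpace ℝ (Fin n))
    (β : ℝ) (hβ : 0 < β)
    -- R is proper, convex and lower semicontinuous
    (hRbot : ∀ x, R x ≠ ⊥) (hRtop : ∃ x, R x ≠ ⊤)
    (hRconv : ∀ x y : EuclideanSpace ℝ (Fin n), ∀ t : ℝ, 0 ≤ t → t ≤ 1 →
      R (t • x + (1 - t) • y) ≤ (t : EReal) * R x + ((1 - t : ℝ) : EReal) * R y)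
    (hRlsc : LowerSemicontinuous R)
    -- F is differentiable with β-cocoercive gradient
    (hFgrad : ∀ x, HasGradientAt F (Fgrad x) x)
    (hcoco : ∀ u v, β * ‖Fgrad u - Fgrad v‖ ^ 2 ≤ (inner ℝ (Fgrad u - Fgrad v) (u - v) : ℝ))
    -- parameters
    (a b γ : ℕ → ℝ)
    (ha : ∀ k, a k ∈ Set.Icc (0 : ℝ) 1)
    (hb : ∀ k, b k ∈ Set.Icc (0 : ℝ) 1)
    (hγ : ∀ k, γ k ∈ Set.Ioc (0 : ℝ) (2 * β))
    -- the iFB iterates (with the convention `x (0 - 1) = x 0`, i.e. x₋₁ = x₀)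
    (x : ℕ → EuclideanSpace ℝ (Fin n))
    (hiter : ∀ k, ∃ g ∈ subdiff R (x (k + 1)),
      (x k + a k • (x k - x (k - 1))) - γ k • Fgrad (x k + b k • (x k - x (k - 1)))
        - x (k + 1) = γ k • g) :
    ∀ k : ℕ,
      Metric.infDist (0 : EuclideanSpace ℝ (Fin n))
          {z | ∃ g ∈ subdiff R (x (k + 1)), z = Fgrad (x (k + 1)) + g}
        ≤ (1 / γ k) * (3 * ‖x k - x (k - 1)‖ + ‖x (k + 1) - x k‖) := by
  intro k
  obtain ⟨g, hg, heq⟩ := hiter k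
  obtain ⟨hγ0, hγβ⟩ := hγ k
  set X := x (k + 1)
  set d := x k - x (k - 1)
  set yb := x k + b k • d with hyb
  set z := Fgrad X + g with hz
  have hzmem : z ∈ {z | ∃ g ∈ subdiff R (x (k + 1)), z = Fgrad (x (k + 1)) + g} :=
    ⟨g, hg, rfl⟩
  have h1 : Metric.infDist (0 : EuclideanSpace ℝ (Fin n))
      {z | ∃ g ∈ subdiff R (x (k + 1)), z = Fgrad (x (k + 1)) + g} ≤ ‖z‖ := by
    have := Metric.infDist_le_dist_of_mem (x := (0 : EuclideanSpace ℝ (Fin n))) hzmem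
    rwa [dist_zero_left] at this
  have key : γ k • z = (a k - b k) • d - ((X - yb) - γ k • (Fgrad X - Fgrad yb)) := by
    rw [hz, smul_add, ← heq]
    module
  have hne : ‖(X - yb) - γ k • (Fgrad X - Fgrad yb)‖ ≤ ‖X - yb‖ :=
    nonexp_aux (γ k) β hγ0 hγβ X yb _ _ (hcoco X yb)
  have hXyb : ‖X - yb‖ ≤ ‖x (k+1) - x k‖ + ‖d‖ := by
    have : X - yb = (x (k+1) - x k) - b k • d := by rw [hyb]; abel
    rw [this]
    calc ‖(x (k+1) - x k) - b k • d‖ ≤ ‖x (k+1) - x k‖ + ‖b k • d‖ := norm_sub_le _ _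
      _ ≤ ‖x (k+1) - x k‖ + ‖d‖ := by
          rw [norm_smul, Real.norm_eq_abs, abs_of_nonneg (hb k).1]
          nlinarith [norm_nonneg d, (hb k).2]
  have hab : ‖(a k - b k) • d‖ ≤ ‖d‖ := by
    rw [norm_smul, Real.norm_eq_abs]
    have : |a k - b k| ≤ 1 := by
      rw [abs_le]; constructor <;> [linarith [(ha k).1, (hb k).2]; linarith [(ha k).2, (hb k).1]]
    nlinarith [norm_nonneg d]
  have hγz : γ k * ‖z‖ ≤ 3 * ‖d‖ + ‖x (k+1) - x k‖ := by
    have h := norm_sub_le ((a k - b k) • d) ((X - yb) - γ k • (Fgrad X - Fgrad yb))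
    rw [← key] at h
    rw [norm_smul, Real.norm_eq_abs, abs_of_pos hγ0] at h
    linarith [norm_nonneg d]
  rw [div_mul_eq_mul_div, one_mul, le_div_iff₀ hγ0]
  nlinarith [mul_le_mul_of_nonneg_right h1 hγ0.le, hγz]
end

section
/- Consider the Forward–Backward iteration in which x_k satisfies x_{k−1} − γ_{k−1}∇F(x_{k−1}) − x_k ∈ γ_{k−1}∂R(x_k) with γ_{k−1} ∈ (0, 2β], and let x⋆ ∈ Argmin(F + R). Then ‖x_k − x⋆‖² ≤ ‖x_{k−1} − x⋆‖² − γ_{k−1}²·dist(−∇F(x⋆), ∂R(x_k))², where dist(−∇F(x⋆), ∂R(x_k)) = inf{‖∇F(x⋆) + g‖ : g ∈ ∂R(x_k)}. (Per-iteration decrease estimate from the proof of Proposition 3.6(i).) -/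
open Filter Topology

/-- **Per-iteration decrease estimate** from the proof of Proposition 3.6(i): for a
Forward–Backward step `xprev ↦ xcur` with step-size `γ ∈ (0, 2β]` and a minimizer `x⋆`,
`‖xcur − x⋆‖² ≤ ‖xprev − x⋆‖² − γ²·dist(−∇F(x⋆), ∂R(xcur))²`. -/
theorem fb_periteration_decrease {n : ℕ}
    (R : EuclideanSpace ℝ (Fin n) → EReal)
    (F : EuclideanSpace ℝ (Fin n) → ℝ)
    (Fgrad : EuclideanSpace ℝ (Fin n) → EuclideanSpace ℝ (Fin n))
    (β : ℝ) (hβ : 0 < β)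
    -- R is proper, convex and lower semicontinuous
    (hRbot : ∀ x, R x ≠ ⊥) (hRtop : ∃ x, R x ≠ ⊤)
    (hRconv : ∀ x y : EuclideanSpace ℝ (Fin n), ∀ t : ℝ, 0 ≤ t → t ≤ 1 →
      R (t • x + (1 - t) • y) ≤ (t : EReal) * R x + ((1 - t : ℝ) : EReal) * R y)
    (hRlsc : LowerSemicontinuous R)
    -- F is differentiable with β-cocoercive gradient
    (hFgrad : ∀ x, HasGradientAt F (Fgrad x) x)
    (hcoco : ∀ u v, β * ‖Fgrad u - Fgrad v‖ ^ 2 ≤ (inner ℝ (Fgrad u - Fgrad v) (u - v) : ℝ))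
    -- step-size
    (γ : ℝ) (hγ : γ ∈ Set.Ioc (0 : ℝ) (2 * β))
    -- a global minimizer x⋆ of F + R, i.e. −∇F(x⋆) ∈ ∂R(x⋆)
    (xstar : EuclideanSpace ℝ (Fin n))
    (hstar : -Fgrad xstar ∈ subdiff R xstar)
    -- one Forward–Backward step
    (xprev xcur : EuclideanSpace ℝ (Fin n))
    (hiter : ∃ g ∈ subdiff R xcur, xprev - γ • Fgrad xprev - xcur = γ • g) :
    ‖xcur - xstar‖ ^ 2 ≤ ‖xprev - xstar‖ ^ 2
      - γ ^ 2 * (Metric.infDist (-Fgrad xstar) (subdiff R xcur)) ^ 2 := by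
  obtain ⟨g, hg, hstep⟩ := hiter
  obtain ⟨γpos, γle⟩ := hγ
  obtain ⟨x0, hx0⟩ := hRtop
  -- finiteness
  have hcur_top : R xcur ≠ ⊤ := by
    intro h
    have h1 := hg x0
    rw [h, EReal.top_add_coe, top_le_iff] at h1
    exact hx0 h1
  have hstar_top : R xstar ≠ ⊤ := by
    intro h
    have h1 := hstar xcur
    rw [h, EReal.top_add_coe, top_le_iff] at h1
    exact hcur_top h1
  set A : ℝ := (R xcur).toReal with hA
  set B : ℝ := (R xstar).toReal with hB
  have hRA : R xcur = (A : EReal) := (EReal.coe_toReal hcur_top (hRbot xcur)).symm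
  have hRB : R xstar = (B : EReal) := (EReal.coe_toReal hstar_top (hRbot xstar)).symm
  have h1 : A + (inner ℝ g (xstar - xcur) : ℝ) ≤ B := by
    have := hg xstar
    rw [hRA, hRB, ← EReal.coe_add, EReal.coe_le_coe_iff] at this
    exact this
  have h2 : B + (inner ℝ (-Fgrad xstar) (xcur - xstar) : ℝ) ≤ A := by
    have := hstar xcur
    rw [hRA, hRB, ← EReal.coe_add, EReal.coe_le_coe_iff] at this
    exact this
  -- monotonicity
  set a := Fgrad xprev - Fgrad xstar with ha
  set b := Fgrad xstar + g with hb
  set u := xcur - xstar with hu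
  set v := xprev - xstar with hv
  have hkey : 0 ≤ (inner ℝ b u : ℝ) := by
    have e1 : (inner ℝ g (xstar - xcur) : ℝ) = -(inner ℝ g u : ℝ) := by
      rw [hu, ← inner_neg_right]; congr 1; abel
    have e2 : (inner ℝ (-Fgrad xstar) (xcur - xstar) : ℝ) = -(inner ℝ (Fgrad xstar) u : ℝ) := by
      rw [inner_neg_left]
    have e3 : (inner ℝ b u : ℝ) = inner ℝ (Fgrad xstar) u + (inner ℝ g u : ℝ) := by
      rw [hb, inner_add_left]
    rw [e1] at h1; rw [e2] at h2
    linarith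
  have hcc : β * ‖a‖ ^ 2 ≤ (inner ℝ a v : ℝ) := hcoco xprev xstar
  have huv : u = v - γ • (a + b) := by
    rw [hu, hv, ha, hb]
    have : xcur = xprev - γ • Fgrad xprev - γ • g := by
      rw [← hstep]; abel
    rw [this, smul_add]
    simp only [smul_sub, smul_add]
    abel
  -- infDist bound
  have hd0 : 0 ≤ Metric.infDist (-Fgrad xstar) (subdiff R xcur) := Metric.infDist_nonneg
  have hdb : Metric.infDist (-Fgrad xstar) (subdiff R xcur) ≤ ‖b‖ := by
    have := Metric.infDist_le_dist_of_mem (x := -Fgrad xstar) hg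
    rwa [dist_eq_norm, show -Fgrad xstar - g = -b by rw [hb]; abel, norm_neg] at this
  have hd2 : (Metric.infDist (-Fgrad xstar) (subdiff R xcur)) ^ 2 ≤ ‖b‖ ^ 2 :=
    pow_le_pow_left₀ hd0 hdb 2
  -- norm expansion
  have hnu : ‖u‖ ^ 2 = ‖v‖ ^ 2 - 2 * γ * (inner ℝ (a + b) v : ℝ) + γ ^ 2 * ‖a + b‖ ^ 2 := by
    rw [huv, norm_sub_sq_real, real_inner_smul_right, norm_smul, mul_pow, Real.norm_eq_abs, sq_abs,
      real_inner_comm v (a + b)]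
    ring
  have hab2 : ‖a + b‖ ^ 2 = ‖a‖ ^ 2 + 2 * (inner ℝ a b : ℝ) + ‖b‖ ^ 2 := norm_add_sq_real a b
  have hbu : (inner ℝ b u : ℝ) = (inner ℝ b v : ℝ) - γ * ((inner ℝ a b : ℝ) + ‖b‖ ^ 2) := by
    rw [huv, inner_sub_right, real_inner_smul_right, inner_add_right,
      real_inner_self_eq_norm_sq, real_inner_comm b a]
  have habv : (inner ℝ (a + b) v : ℝ) = (inner ℝ a v : ℝ) + (inner ℝ b v : ℝ) := inner_add_left a b v
  have hb2 : 0 ≤ ‖b‖ ^ 2 := sq_nonneg _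
  have ha2 : 0 ≤ ‖a‖ ^ 2 := sq_nonneg _
  nlinarith [sq_nonneg γ, mul_pos γpos γpos, mul_nonneg (le_of_lt γpos) ha2,
    mul_le_mul_of_nonneg_left hcc (le_of_lt γpos)]
end

section
/- Let x⋆ ∈ Argmin(F + R), assume F is twice continuously differentiable on a neighborhood of x⋆, and assume the non-degeneracy condition (ND): −∇F(x⋆) ∈ ri(∂R(x⋆)), and the restricted injectivity condition (RI): ker(∇²F(x⋆)) ∩ T_{x⋆} = {0}. Then x⋆ is the unique global minimizer of F + R. (Proposition 4.1(i).) -/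
open Filter Topology InnerProductSpace

section Helpers

variable {E : Type*} [NormedAddCommGroup E] [InnerProductSpace ℝ E] [CompleteSpace E]

lemma grad_ineq {F : E → ℝ} (hFconv : ConvexOn ℝ Set.univ F) {x g : E}
    (hg : HasGradientAt F g x) (y : E) :
    F x + inner ℝ g (y - x) ≤ F y := by
  rcases eq_or_ne y x with rfl | hne
  · simp
  have hF' : HasFDerivAt F (toDual ℝ E g) x := hg.hasFDerivAt
  set γ : ℝ → E := fun t => x + t • (y - x) with hγ
  have hγd : ∀ t : ℝ, HasDerivAt γ (y - x) t := by
    intro t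
    have := ((hasDerivAt_id t).smul_const (y - x)).const_add x
    rw [one_smul] at this
    exact this
  have hγ0 : γ 0 = x := by simp [γ]
  have hφ : HasDerivAt (F ∘ γ) (inner ℝ g (y - x)) 0 := by
    have hF'' : HasFDerivAt F (toDual ℝ E g) (γ 0) := by rwa [hγ0]
    simpa [InnerProductSpace.toDual_apply_apply] using hF''.comp_hasDerivAt 0 (hγd 0)
  have hconv : ConvexOn ℝ Set.univ (F ∘ γ) := by
    have := hFconv.comp_affineMap
      (AffineMap.lineMap x y : ℝ →ᵃ[ℝ] E)
    have heq : (F ∘ (AffineMap.lineMap x y : ℝ →ᵃ[ℝ] E)) = F ∘ γ := by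
      funext t
      simp [γ, AffineMap.lineMap_apply, Function.comp]
      congr 1
      module
    simpa [heq] using this
  have := hconv.le_slope_of_hasDerivAt (Set.mem_univ (0:ℝ)) (Set.mem_univ (1:ℝ)) one_pos hφ
  rw [slope_def_field] at this
  simp [γ] at this
  linarith

lemma grad_const_seg {F : E → ℝ} {Fgrad : E → E} (hFconv : ConvexOn ℝ Set.univ F)
    (hFgrad : ∀ x, HasGradientAt F (Fgrad x) x) {x z : E}
    (heq : F z = F x + inner ℝ (Fgrad x) (z - x)) :
    ∀ t : ℝ, 0 ≤ t → t ≤ 1 → Fgrad (x + t • (z - x)) = Fgrad x := by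
  set c := Fgrad x with hcdef
  set G : E → ℝ := fun y => F y - inner ℝ c y with hG
  have hGgrad : ∀ u, HasGradientAt G (Fgrad u - c) u := by
    intro u
    have h1 : HasFDerivAt F (toDual ℝ E (Fgrad u)) u := (hFgrad u).hasFDerivAt
    have h2 : HasFDerivAt (fun y => (inner ℝ c y : ℝ)) (toDual ℝ E c) u :=
      (toDual ℝ E c).hasFDerivAt
    have h3 : HasFDerivAt G (toDual ℝ E (Fgrad u) - toDual ℝ E c) u := h1.sub h2
    rw [← map_sub] at h3
    simpa using h3.hasGradientAt
  have hGconv : ConvexOn ℝ Set.univ G := by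
    refine ⟨convex_univ, fun p _ q _ a b ha hb hab => ?_⟩
    have := hFconv.2 (Set.mem_univ p) (Set.mem_univ q) ha hb hab
    simp only [smul_eq_mul] at this
    simp only [hG, inner_add_right, real_inner_smul_right, smul_eq_mul]
    linarith
  have hGmin : ∀ y, G x ≤ G y := by
    intro y
    have := grad_ineq hGconv (hGgrad x) y
    simpa [hcdef] using this
  have hGz : G z = G x := by
    simp only [hG]
    rw [heq, inner_sub_right]; ring
  intro t ht0 ht1
  set w := x + t • (z - x) with hw
  have hwc : w = (1 - t) • x + t • z := by
    simp [hw, smul_sub, sub_smul]; abel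
  have hGw : ∀ y, G w ≤ G y := by
    intro y
    have hup : G w ≤ G x := by
      rw [hwc]
      calc G ((1-t) • x + t • z) ≤ (1-t) * G x + t * G z := by
            have := hGconv.2 (Set.mem_univ x) (Set.mem_univ z) (show (0:ℝ) ≤ 1 - t by linarith) ht0 (show (1-t)+t = 1 by ring)
            simp only [smul_eq_mul] at this
            exact this
        _ = G x := by rw [hGz]; ring
    exact hup.trans (hGmin y)
  have hloc : IsLocalMin G w := Filter.Eventually.of_forall hGw
  have hzero := hloc.hasFDerivAt_eq_zero (hGgrad w).hasFDerivAt
  have : Fgrad w - c = 0 := by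
    have := congrArg (fun L => (toDual ℝ E).symm L) hzero
    simpa using this
  have := sub_eq_zero.mp this
  simpa [hw] using this

lemma ri_move {S : Set E} {g0 g : E}
    (hg0 : g0 ∈ intrinsicInterior ℝ S) (hg : g ∈ S) :
    ∃ t : ℝ, 0 < t ∧ g0 + t • (g0 - g) ∈ S := by
  obtain ⟨y, hy, hyg0⟩ := mem_intrinsicInterior.mp hg0
  have hg0S : g0 ∈ S := intrinsicInterior_subset hg0
  have hg0span : g0 ∈ affineSpan ℝ S := subset_affineSpan ℝ S hg0S
  have hgspan : g ∈ affineSpan ℝ S := subset_affineSpan ℝ S hg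
  have hmem : ∀ t : ℝ, g0 + t • (g0 - g) ∈ affineSpan ℝ S := by
    intro t
    have := AffineSubspace.smul_vsub_vadd_mem (affineSpan ℝ S) t hg0span hgspan hg0span
    simpa [vsub_eq_sub, vadd_eq_add, add_comm] using this
  set c : ℝ → affineSpan ℝ S := fun t => ⟨g0 + t • (g0 - g), hmem t⟩ with hc
  have hcont : Continuous c := by
    apply Continuous.subtype_mk
    exact continuous_const.add (continuous_id.smul continuous_const)
  have hc0 : c 0 = y := by
    apply Subtype.ext
    simp [c, hyg0]
  have hopen : IsOpen (c ⁻¹' interior ((↑) ⁻¹' S : Set (affineSpan ℝ S))) :=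
    isOpen_interior.preimage hcont
  have h0mem : (0:ℝ) ∈ c ⁻¹' interior ((↑) ⁻¹' S : Set (affineSpan ℝ S)) := by
    simp only [Set.mem_preimage, hc0]; exact hy
  obtain ⟨l, u, hlu, hsub⟩ := mem_nhds_iff_exists_Ioo_subset.mp (hopen.mem_nhds h0mem)
  refine ⟨u/2, by linarith [hlu.2], ?_⟩
  have : c (u/2) ∈ interior ((↑) ⁻¹' S : Set (affineSpan ℝ S)) :=
    hsub ⟨by linarith [hlu.1, hlu.2], by linarith [hlu.2]⟩
  have h2 : c (u/2) ∈ ((↑) ⁻¹' S : Set (affineSpan ℝ S)) := interior_subset this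
  exact h2


end Helpers


open Filter Topology

/-- **Proposition 4.1(i): uniqueness of the minimizer** under the non-degeneracy
condition (ND) `−∇F(x⋆) ∈ ri(∂R(x⋆))` and the restricted injectivity condition (RI)
`ker(∇²F(x⋆)) ∩ T_{x⋆} = {0}`, where `T_{x⋆}` is the orthogonal complement of the
subspace parallel to the affine hull of `∂R(x⋆)`. -/
theorem unique_minimizer {n : ℕ}
    (R : EuclideanSpace ℝ (Fin n) → EReal)
    (F : EuclideanSpace ℝ (Fin n) → ℝ)
    (Fgrad : EuclideanSpace ℝ (Fin n) → EuclideanSpace ℝ (Fin n))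
    (β : ℝ) (hβ : 0 < β)
    -- R is proper, convex and lower semicontinuous
    (hRbot : ∀ x, R x ≠ ⊥) (hRtop : ∃ x, R x ≠ ⊤)
    (hRconv : ∀ x y : EuclideanSpace ℝ (Fin n), ∀ t : ℝ, 0 ≤ t → t ≤ 1 →
      R (t • x + (1 - t) • y) ≤ (t : EReal) * R x + ((1 - t : ℝ) : EReal) * R y)
    (hRlsc : LowerSemicontinuous R)
    -- F is convex and differentiable with (1/β)-Lipschitz gradient
    (hFconv : ConvexOn ℝ Set.univ F)
    (hFgrad : ∀ x, HasGradientAt F (Fgrad x) x)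
    (hFlip : ∀ x y, ‖Fgrad x - Fgrad y‖ ≤ (1 / β) * ‖x - y‖)
    -- x⋆ is a global minimizer of F + R
    (xstar : EuclideanSpace ℝ (Fin n))
    (hmin : ∀ y, (F xstar : EReal) + R xstar ≤ (F y : EReal) + R y)
    -- F is C² on a neighborhood of x⋆
    (hC2 : ∃ U ∈ 𝓝 xstar, ContDiffOn ℝ 2 F U)
    -- non-degeneracy condition (ND)
    (hND : -Fgrad xstar ∈ intrinsicInterior ℝ (subdiff R xstar))
    -- restricted injectivity condition (RI): ker(∇²F(x⋆)) ∩ T_{x⋆} = {0}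
    (hRI : ∀ h : EuclideanSpace ℝ (Fin n),
      h ∈ ((affineSpan ℝ (subdiff R xstar)).direction)ᗮ →
      fderiv ℝ Fgrad xstar h = 0 → h = 0) :
    ∀ z, (∀ y, (F z : EReal) + R z ≤ (F y : EReal) + R y) → z = xstar := by
  
  intro z hz
  set S := subdiff R xstar with hSdef
  set g0 := -Fgrad xstar with hg0def
  have hg0sub : g0 ∈ S := intrinsicInterior_subset hND
  set h := z - xstar with hh
  set a : ℝ := inner ℝ (Fgrad xstar) h with ha
  -- finiteness of R at xstar and z
  obtain ⟨x0, hx0⟩ := hRtop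
  have hsum0 : (F x0 : EReal) + R x0 ≠ ⊤ := by
    exact (EReal.add_lt_top (by simp) hx0).ne
  have hRxtop : R xstar ≠ ⊤ := by
    intro htop
    have h1 := hmin x0
    rw [htop, EReal.add_top_of_ne_bot (by simp)] at h1
    exact hsum0 (top_le_iff.mp h1)
  have hRztop : R z ≠ ⊤ := by
    intro htop
    have h1 := hz x0
    rw [htop, EReal.add_top_of_ne_bot (by simp)] at h1
    exact hsum0 (top_le_iff.mp h1)
  set rx : ℝ := (R xstar).toReal with hrx
  set rz : ℝ := (R z).toReal with hrzdef
  have hRx : R xstar = (rx : EReal) := (EReal.coe_toReal hRxtop (hRbot _)).symm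
  have hRz : R z = (rz : EReal) := (EReal.coe_toReal hRztop (hRbot _)).symm
  -- the subdifferential inequality, real form
  have hsubR : ∀ g ∈ S, rx + inner ℝ g h ≤ rz := by
    intro g hg
    have h1 := hg z
    rw [hRx, hRz, ← hh] at h1
    rw [← EReal.coe_add] at h1
    exact_mod_cast h1
  -- gradient inequality for F
  have hFineq : F xstar + a ≤ F z := by
    have := grad_ineq hFconv (hFgrad xstar) z
    rwa [← hh, ← ha] at this
  -- equality of objective values
  have hE : F z + rz = F xstar + rx := by
    have h1 := le_antisymm (hz xstar) (hmin z)
    rw [hRx, hRz, ← EReal.coe_add, ← EReal.coe_add] at h1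
    exact_mod_cast h1
  -- g0 subdifferential inequality: rx + (-a) ≤ rz
  have hg0ineq : rx + -a ≤ rz := by
    have := hsubR g0 hg0sub
    rwa [hg0def, inner_neg_left, ← ha] at this
  have hFz : F z = F xstar + a := by linarith
  have hrz2 : rz = rx - a := by linarith
  -- orthogonality of h
  have hkey : ∀ g ∈ S, inner ℝ (g - g0) h = (0 : ℝ) := by
    intro g hg
    have hle : inner ℝ (g - g0) h ≤ (0:ℝ) := by
      have h1 := hsubR g hg
      rw [inner_sub_left, hg0def, inner_neg_left, ← ha]
      linarith
    have hge : (0:ℝ) ≤ inner ℝ (g - g0) h := by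
      obtain ⟨t, ht, htmem⟩ := ri_move hND hg
      have h1 := hsubR _ htmem
      have h2 : inner ℝ (g0 + t • (g0 - g)) h = -a + t * inner ℝ (g0 - g) h := by
        rw [inner_add_left, real_inner_smul_left, hg0def, inner_neg_left, ← ha]
      rw [h2] at h1
      have h3 : t * inner ℝ (g0 - g) h ≤ 0 := by linarith
      have h4 : (inner ℝ (g0 - g) h : ℝ) ≤ 0 := nonpos_of_mul_nonpos_right ?_ ht
      · rw [inner_sub_left] at h4 ⊢
        linarith
      · linarith [mul_comm t (inner ℝ (g0 - g) h : ℝ)]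
    linarith
  have hort : h ∈ ((affineSpan ℝ S).direction)ᗮ := by
    rw [Submodule.mem_orthogonal]
    intro v hv
    rw [direction_affineSpan] at hv
    rw [vectorSpan_def] at hv
    induction hv using Submodule.span_induction with
    | mem v hvm =>
      obtain ⟨p, hp, q, hq, rfl⟩ := hvm
      have h1 := hkey p hp
      have h2 := hkey q hq
      show inner ℝ (p - q) h = (0:ℝ)
      rw [inner_sub_left] at h1 h2 ⊢
      linarith
    | zero => simp
    | add u w _ _ hu hw => rw [inner_add_left, hu, hw]; ring
    | smul c u _ hu => rw [real_inner_smul_left, hu]; ring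
  -- gradient constant along segment
  have hseg : ∀ t : ℝ, 0 ≤ t → t ≤ 1 → Fgrad (xstar + t • h) = Fgrad xstar := by
    have := grad_const_seg hFconv hFgrad (x := xstar) (z := z) (by rw [← hh, ← ha]; exact hFz)
    intro t ht0 ht1
    have := this t ht0 ht1
    rwa [← hh] at this
  -- Fgrad differentiable at xstar
  obtain ⟨U, hU, hFC2⟩ := hC2
  have hc2at : ContDiffAt ℝ 2 F xstar := hFC2.contDiffAt hU
  have hc1 : ContDiffAt ℝ 1 (fderiv ℝ F) xstar := hc2at.fderiv_right (by norm_num)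
  have hdf : DifferentiableAt ℝ (fderiv ℝ F) xstar := hc1.differentiableAt (by norm_num)
  have hFgrad_eq : Fgrad = fun x => (InnerProductSpace.toDual ℝ _).symm (fderiv ℝ F x) := by
    funext x
    rw [(hFgrad x).hasFDerivAt.fderiv]
    simp
  have hdg : DifferentiableAt ℝ Fgrad xstar := by
    rw [hFgrad_eq]
    exact ((InnerProductSpace.toDual ℝ _).symm.toContinuousLinearEquiv.differentiableAt).comp
      xstar hdf
  set D := fderiv ℝ Fgrad xstar with hD
  have hDf : HasFDerivAt Fgrad D xstar := hdg.hasFDerivAt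
  -- directional derivative of Fgrad along h is zero
  set γ : ℝ → EuclideanSpace ℝ (Fin n) := fun t => xstar + t • h with hγ
  have hγ0 : γ 0 = xstar := by simp [hγ]
  have hγd : HasDerivAt γ h 0 := by
    have := ((hasDerivAt_id (0:ℝ)).smul_const h).const_add xstar
    rw [one_smul] at this
    exact this
  have hψ : HasDerivAt (Fgrad ∘ γ) (D h) 0 := by
    have hDf' : HasFDerivAt Fgrad D (γ 0) := by rwa [hγ0]
    exact hDf'.comp_hasDerivAt 0 hγd
  have hψw : HasDerivWithinAt (Fgrad ∘ γ) (D h) (Set.Icc 0 1) 0 := hψ.hasDerivWithinAt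
  have hψc : HasDerivWithinAt (Fgrad ∘ γ) 0 (Set.Icc 0 1) 0 := by
    have hcst : HasDerivWithinAt (fun _ : ℝ => Fgrad xstar) 0 (Set.Icc 0 1) 0 :=
      (hasDerivWithinAt_const 0 _ (Fgrad xstar))
    apply hcst.congr
    · intro t htt
      exact hseg t htt.1 htt.2
    · simp [Function.comp, hγ0]
  have huniq : UniqueDiffWithinAt ℝ (Set.Icc (0:ℝ) 1) 0 :=
    uniqueDiffOn_Icc_zero_one 0 ⟨le_refl 0, zero_le_one⟩
  have hDh : D h = 0 := by
    rw [← hψw.derivWithin huniq, hψc.derivWithin huniq]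
  have := hRI h hort hDh
  rw [hh] at this
  exact sub_eq_zero.mp this
end

section
/- Let x⋆ ∈ ℝⁿ, let T ⊆ ℝⁿ be a linear subspace with orthogonal projection P_T, and let R̃ be a twice continuously differentiable real-valued function on a neighborhood of x⋆ such that, for some ε > 0, for every h ∈ T with ‖h‖ < ε the set ∂R(x⋆ + h) is nonempty and P_T v = P_T ∇R̃(x⋆ + h) for every v ∈ ∂R(x⋆ + h). Then P_T ∇²R̃(x⋆) P_T is positive semidefinite, i.e. ⟨h, ∇²R̃(x⋆) h⟩ ≥ 0 for all h ∈ T. (Abstract form of Lemma 4.3(ii): the Riemannian Hessian of a convex function along an affine subspace is positive semidefinite.) -/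
open Filter Topology

/-- If the subdifferential at `z` is nonempty and `R` is not identically `⊤`,
then `R z ≠ ⊤`. -/
lemma subdiff_ne_top {n : ℕ} {R : EuclideanSpace ℝ (Fin n) → EReal}
    (hRtop : ∃ x, R x ≠ ⊤) {z v : EuclideanSpace ℝ (Fin n)}
    (hv : v ∈ subdiff R z) : R z ≠ ⊤ := by
  intro htop
  obtain ⟨y, hy⟩ := hRtop
  have := hv y
  rw [htop] at this
  rw [EReal.top_add_of_ne_bot (by exact_mod_cast EReal.coe_ne_bot _)] at this
  exact hy (top_le_iff.mp this)

/-- For `h ∈ T`, the inner ℝ product with `v` equals that with its projection. -/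
lemma inner_eq_inner_proj {n : ℕ} (T : Submodule ℝ (EuclideanSpace ℝ (Fin n)))
    {h : EuclideanSpace ℝ (Fin n)} (hh : h ∈ T) (v : EuclideanSpace ℝ (Fin n)) :
    (inner ℝ h v : ℝ) = inner ℝ h (T.orthogonalProjectionOnto v : EuclideanSpace ℝ (Fin n)) := by
  have hmem : v - (T.orthogonalProjectionOnto v : EuclideanSpace ℝ (Fin n)) ∈ Tᗮ :=
    T.sub_starProjection_mem_orthogonal v
  have h0 : (inner ℝ h (v - (T.orthogonalProjectionOnto v : EuclideanSpace ℝ (Fin n))) : ℝ) = 0 :=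
    hmem h hh
  rw [inner_sub_right] at h0
  linarith

/-- **Abstract form of Lemma 4.3(ii)**: if along the affine subspace `x⋆ + T` the
projection of the subdifferential of the convex function `R` agrees with the projection
of the gradient of a smooth representative `R̃`, then `P_T ∇²R̃(x⋆) P_T` is positive
semidefinite. -/
theorem riemannian_hessian_psd {n : ℕ}
    (R : EuclideanSpace ℝ (Fin n) → EReal)
    -- R is proper, convex and lower semicontinuous
    (hRbot : ∀ x, R x ≠ ⊥) (hRtop : ∃ x, R x ≠ ⊤)
    (hRconv : ∀ x y : EuclideanSpace ℝ (Fin n), ∀ t : ℝ, 0 ≤ t → t ≤ 1 →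
      R (t • x + (1 - t) • y) ≤ (t : EReal) * R x + ((1 - t : ℝ) : EReal) * R y)
    (hRlsc : LowerSemicontinuous R)
    -- the smooth representative R̃, its gradient and Hessian at x⋆
    (Rt : EuclideanSpace ℝ (Fin n) → ℝ)
    (Rgrad : EuclideanSpace ℝ (Fin n) → EuclideanSpace ℝ (Fin n))
    (Rhess : EuclideanSpace ℝ (Fin n) →L[ℝ] EuclideanSpace ℝ (Fin n))
    (xstar : EuclideanSpace ℝ (Fin n))
    (T : Submodule ℝ (EuclideanSpace ℝ (Fin n)))
    -- R̃ is twice continuously differentiable on a neighborhood of x⋆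
    (hC2 : ∃ U ∈ 𝓝 xstar, ContDiffOn ℝ 2 Rt U)
    (hgrad : ∀ᶠ z in 𝓝 xstar, HasGradientAt Rt (Rgrad z) z)
    (hhess : HasFDerivAt Rgrad Rhess xstar)
    -- the projected subdifferential agrees with the projected gradient along x⋆ + T
    (ε : ℝ) (hε : 0 < ε)
    (hsub : ∀ h ∈ T, ‖h‖ < ε →
      (subdiff R (xstar + h)).Nonempty ∧
      ∀ v ∈ subdiff R (xstar + h),
        T.orthogonalProjectionOnto v = T.orthogonalProjectionOnto (Rgrad (xstar + h))) :
    ∀ h ∈ T, 0 ≤ (inner ℝ h (Rhess h) : ℝ) := by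
  intro h hhT
  by_cases hh0 : h = 0
  · simp [hh0]
  have hnorm : (0:ℝ) < ‖h‖ := norm_pos_iff.mpr hh0
  set δ : ℝ := ε / ‖h‖ with hδdef
  have hδ : 0 < δ := div_pos hε hnorm
  -- data at xstar itself
  obtain ⟨⟨w, hw⟩, hwproj⟩ := hsub 0 T.zero_mem (by simpa using hε)
  rw [add_zero] at hw hwproj
  have hRx_top : R xstar ≠ ⊤ := subdiff_ne_top hRtop hw
  obtain ⟨ra, hra⟩ : ∃ r : ℝ, R xstar = (r : EReal) := by
    cases hx : R xstar with
    | bot => exact absurd hx (hRbot _)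
    | top => exact absurd hx hRx_top
    | coe r => exact ⟨r, rfl⟩
  -- the auxiliary scalar function
  set φ : ℝ → ℝ := fun t => inner ℝ h (Rgrad (xstar + t • h)) with hφdef
  -- φ has derivative ⟨h, Rhess h⟩ at 0
  have hc : HasDerivAt (fun t : ℝ => xstar + t • h) h 0 := by
    simpa using ((hasDerivAt_id (0:ℝ)).smul_const h).const_add xstar
  have hc0 : HasFDerivAt Rgrad Rhess ((fun t : ℝ => xstar + t • h) 0) := by
    simpa using hhess
  have hd1 : HasDerivAt (fun t : ℝ => Rgrad (xstar + t • h)) (Rhess h) 0 :=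
    hc0.comp_hasDerivAt 0 hc
  have hdφ : HasDerivAt φ (inner ℝ h (Rhess h) : ℝ) 0 := by
    have := ((innerSL ℝ h).hasFDerivAt.comp_hasDerivAt 0 hd1)
    simpa [hφdef, innerSL_apply_apply, Function.comp_def] using this
  -- monotonicity: φ 0 ≤ φ t for t ∈ (0, δ)
  have hmono : ∀ t ∈ Set.Ioo (0:ℝ) δ, φ 0 ≤ φ t := by
    rintro t ⟨ht0, htδ⟩
    have hnormth : ‖t • h‖ < ε := by
      rw [norm_smul, Real.norm_eq_abs, abs_of_pos ht0]
      calc t * ‖h‖ < δ * ‖h‖ := by exact mul_lt_mul_of_pos_right htδ hnorm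
        _ = ε := by rw [hδdef, div_mul_cancel₀ _ hnorm.ne']
    obtain ⟨⟨v, hv⟩, hvproj⟩ := hsub (t • h) (T.smul_mem t hhT) hnormth
    have hRz_top : R (xstar + t • h) ≠ ⊤ := subdiff_ne_top hRtop hv
    obtain ⟨rb, hrb⟩ : ∃ r : ℝ, R (xstar + t • h) = (r : EReal) := by
      cases hx : R (xstar + t • h) with
      | bot => exact absurd hx (hRbot _)
      | top => exact absurd hx hRz_top
      | coe r => exact ⟨r, rfl⟩
    -- subgradient inequalities
    have h1 := hv xstar
    have h2 := hw (xstar + t • h)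
    rw [hra, hrb] at h1 h2
    have e1 : xstar - (xstar + t • h) = -(t • h) := by abel
    have e2 : xstar + t • h - xstar = t • h := by abel
    rw [e1] at h1; rw [e2] at h2
    have i1 : (inner ℝ v (-(t • h)) : ℝ) = -(t * inner ℝ h v) := by
      rw [inner_neg_right, real_inner_smul_right, real_inner_comm]
    have i2 : (inner ℝ w (t • h) : ℝ) = t * inner ℝ h w := by
      rw [real_inner_smul_right, real_inner_comm]
    rw [i1] at h1; rw [i2] at h2
    rw [← EReal.coe_add, EReal.coe_le_coe_iff] at h1 h2
    -- so t * ⟨h,w⟩ ≤ t * ⟨h,v⟩, hence ⟨h,w⟩ ≤ ⟨h,v⟩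
    have hwv : (inner ℝ h w : ℝ) ≤ inner ℝ h v := by
      have := le_of_mul_le_mul_left (by linarith : t * (inner ℝ h w : ℝ) ≤ t * inner ℝ h v) ht0
      exact this
    -- replace v, w by gradients via projections
    have hv' : (inner ℝ h v : ℝ) = inner ℝ h (Rgrad (xstar + t • h)) := by
      rw [inner_eq_inner_proj T hhT v, inner_eq_inner_proj T hhT (Rgrad (xstar + t • h)),
        hvproj v hv]
    have hw' : (inner ℝ h w : ℝ) = inner ℝ h (Rgrad xstar) := by
      rw [inner_eq_inner_proj T hhT w, inner_eq_inner_proj T hhT (Rgrad xstar), hwproj w hw]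
    simp only [hφdef]
    rw [zero_smul, add_zero]
    rw [hv', hw'] at hwv
    exact hwv
  -- conclude via the limit of slopes from the right
  have hslope : Tendsto (slope φ 0) (𝓝[>] 0) (𝓝 (inner ℝ h (Rhess h) : ℝ)) :=
    (hasDerivAt_iff_tendsto_slope.mp hdφ).mono_left
      (nhdsWithin_mono 0 (fun x hx => ne_of_gt hx))
  have hev : ∀ᶠ t in 𝓝[>] (0:ℝ), 0 ≤ slope φ 0 t := by
    filter_upwards [Ioo_mem_nhdsGT_of_mem (Set.mem_Ico.mpr ⟨le_refl 0, hδ⟩)] with t ht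
    have := hmono t ht
    rw [slope_def_field]
    simp only [sub_zero]
    exact div_nonneg (by linarith) ht.1.le
  exact ge_of_tendsto hslope hev
end

section
/- Let U and G be real symmetric n×n matrices with U positive semidefinite, and set W = (Id + U)⁻¹. If every eigenvalue of G lies in the open interval (−1, 1), then every complex eigenvalue of the matrix WG is real and lies in (−1, 1). If moreover G is positive semidefinite, then every eigenvalue of WG lies in [0, 1). (Lemma 4.4(ii).) -/
open Matrix
open scoped ComplexOrder

noncomputable section

namespace Lemma44

variable {n : ℕ}

private lemma semiconj : Function.Semiconj (algebraMap ℝ ℂ) star star := by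
  intro r
  simp [Complex.conj_ofReal]

private lemma herm_map {A : Matrix (Fin n) (Fin n) ℝ} (hA : A.IsHermitian) :
    (A.map (algebraMap ℝ ℂ)).IsHermitian :=
  hA.map _ semiconj

private lemma psd_map {A : Matrix (Fin n) (Fin n) ℝ} (hA : A.PosSemidef) :
    (A.map (algebraMap ℝ ℂ)).PosSemidef := by
  open scoped MatrixOrder in
  obtain ⟨B, rfl⟩ : ∃ B : Matrix (Fin n) (Fin n) ℝ, A = Bᴴ * B :=
    ⟨CFC.sqrt A, by
      rw [(CFC.sqrt_nonneg A).posSemidef.isHermitian.eq, CFC.sqrt_mul_sqrt_self A hA.nonneg]⟩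
  rw [Matrix.map_mul, Matrix.conjTranspose_map _ semiconj]
  exact Matrix.posSemidef_conjTranspose_mul_self _

private lemma posdef_map {A : Matrix (Fin n) (Fin n) ℝ} (hA : A.PosDef) :
    (A.map (algebraMap ℝ ℂ)).PosDef := by
  open scoped MatrixOrder in
  set B := CFC.sqrt A with hBdef
  open scoped MatrixOrder in
  have hBB : B * B = A := CFC.sqrt_mul_sqrt_self A hA.posSemidef.nonneg
  open scoped MatrixOrder in
  have hBherm : B.IsHermitian := (CFC.sqrt_nonneg A).posSemidef.isHermitian
  have hdetB : B.det ≠ 0 := by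
    intro h
    have : A.det = 0 := by rw [← hBB, Matrix.det_mul, h, mul_zero]
    exact hA.det_pos.ne' this
  set Bc := B.map (algebraMap ℝ ℂ) with hBc
  have hBcU : IsUnit Bc := by
    rw [Matrix.isUnit_iff_isUnit_det]
    have : Bc.det = algebraMap ℝ ℂ B.det := (RingHom.map_det (algebraMap ℝ ℂ) B).symm
    rw [this]
    exact isUnit_iff_ne_zero.mpr (by simpa using hdetB)
  have hmap : A.map (algebraMap ℝ ℂ) = Bcᴴ * Bc := by
    rw [← hBB, Matrix.map_mul, (herm_map hBherm).eq]
  refine Matrix.PosDef.of_dotProduct_mulVec_pos ?_ ?_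
  · rw [hmap]; exact Matrix.isHermitian_conjTranspose_mul_self Bc
  · intro x hx
    rw [hmap, ← Matrix.mulVec_mulVec, Matrix.dotProduct_mulVec, Matrix.vecMul_conjTranspose,
      star_star]
    refine Matrix.dotProduct_star_self_pos_iff.mpr ?_
    intro h0
    exact hx ((Matrix.mulVec_injective_iff_isUnit.mpr hBcU) (by simpa using h0))

private lemma posdef_of_eigenvalues_pos {A : Matrix (Fin n) (Fin n) ℝ} (hA : A.IsHermitian)
    (h : ∀ i, 0 < hA.eigenvalues i) : A.PosDef := by
  have hpsd := hA.posSemidef_iff_eigenvalues_nonneg.mpr fun i => (h i).le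
  have hdet : A.det ≠ 0 := by
    rw [hA.det_eq_prod_eigenvalues]
    simpa using (Finset.prod_pos fun i _ => h i).ne'
  refine Matrix.PosDef.of_dotProduct_mulVec_pos hA fun x hx =>
    lt_of_le_of_ne (hpsd.dotProduct_mulVec_nonneg x) fun h0 => hx ?_
  have hz := (hpsd.dotProduct_mulVec_zero_iff x).mp h0.symm
  have hinj := Matrix.mulVec_injective_iff_isUnit.mpr
    ((Matrix.isUnit_iff_isUnit_det A).mpr hdet.isUnit)
  exact hinj (by simpa using hz)


private lemma mem_spec_of_one_sub {G : Matrix (Fin n) (Fin n) ℝ} {μ : ℝ}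
    (h : μ ∈ spectrum ℝ (1 - G)) : 1 - μ ∈ spectrum ℝ G := by
  rw [spectrum.mem_iff] at h ⊢
  intro hu
  apply h
  have key : algebraMap ℝ (Matrix (Fin n) (Fin n) ℝ) μ - (1 - G)
      = -(algebraMap ℝ (Matrix (Fin n) (Fin n) ℝ) (1 - μ) - G) := by
    rw [map_sub, _root_.map_one]; abel
  rw [key]
  exact hu.neg

private lemma mem_spec_of_one_add {G : Matrix (Fin n) (Fin n) ℝ} {μ : ℝ}
    (h : μ ∈ spectrum ℝ (1 + G)) : μ - 1 ∈ spectrum ℝ G := by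
  rw [spectrum.mem_iff] at h ⊢
  intro hu
  apply h
  have key : algebraMap ℝ (Matrix (Fin n) (Fin n) ℝ) μ - (1 + G)
      = algebraMap ℝ (Matrix (Fin n) (Fin n) ℝ) (μ - 1) - G := by
    rw [map_sub, _root_.map_one]; abel
  rw [key]
  exact hu

private lemma map_one_add (A : Matrix (Fin n) (Fin n) ℝ) :
    (1 + A).map (algebraMap ℝ ℂ) = 1 + A.map (algebraMap ℝ ℂ) := by
  ext i j
  simp [Matrix.map_apply, Matrix.add_apply, Matrix.one_apply, apply_ite (algebraMap ℝ ℂ)]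
  split <;> simp

private lemma map_one_sub (A : Matrix (Fin n) (Fin n) ℝ) :
    (1 - A).map (algebraMap ℝ ℂ) = 1 - A.map (algebraMap ℝ ℂ) := by
  ext i j
  simp [Matrix.map_apply, Matrix.sub_apply, Matrix.one_apply, apply_ite (algebraMap ℝ ℂ)]
  split <;> simp

private lemma key {n : ℕ} (U G : Matrix (Fin n) (Fin n) ℝ)
    (hU : U.PosSemidef) (hG : G.IsHermitian)
    (hGspec : ∀ μ ∈ spectrum ℝ G, μ ∈ Set.Ioo (-1 : ℝ) 1)
    {σ : ℂ} (hσ : σ ∈ spectrum ℂ (((1 + U)⁻¹ * G).map (algebraMap ℝ ℂ))) :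
    σ.im = 0 ∧ -1 < σ.re ∧ σ.re < 1 ∧ (G.PosSemidef → 0 ≤ σ.re) := by
  have h1U : (1 + U).PosDef := Matrix.PosDef.one.add_posSemidef hU
  have hdetU : IsUnit (1 + U).det := (Matrix.isUnit_iff_isUnit_det _).mp h1U.isUnit
  have hH1 : (1 - G).IsHermitian := Matrix.isHermitian_one.sub hG
  have hH2 : (1 + G).IsHermitian := Matrix.isHermitian_one.add hG
  have hP1 : (1 - G).PosDef := posdef_of_eigenvalues_pos hH1 fun i => by
    have hm := hH1.eigenvalues_mem_spectrum_real i
    have h2 := (hGspec _ (mem_spec_of_one_sub hm)).2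
    linarith
  have hP2 : (1 + G).PosDef := posdef_of_eigenvalues_pos hH2 fun i => by
    have hm := hH2.eigenvalues_mem_spectrum_real i
    have h2 := (hGspec _ (mem_spec_of_one_add hm)).1
    linarith
  set M := ((1 + U)⁻¹ * G).map (algebraMap ℝ ℂ) with hMdef
  rw [← AlgEquiv.spectrum_eq
      (Matrix.toLinAlgEquiv' : Matrix (Fin n) (Fin n) ℂ ≃ₐ[ℂ] Module.End ℂ (Fin n → ℂ)) M,
    ← Module.End.hasEigenvalue_iff_mem_spectrum] at hσ
  obtain ⟨v, hv⟩ := hσ.exists_hasEigenvector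
  have hv0 : v ≠ 0 := hv.right
  have hMv : M *ᵥ v = σ • v := by
    have := hv.apply_eq_smul
    simpa [Matrix.toLinAlgEquiv'_apply] using this
  have hGv : G.map (algebraMap ℝ ℂ) *ᵥ v = σ • ((1 + U).map (algebraMap ℝ ℂ) *ᵥ v) := by
    calc G.map (algebraMap ℝ ℂ) *ᵥ v
        = ((1 + U) * ((1 + U)⁻¹ * G)).map (algebraMap ℝ ℂ) *ᵥ v := by
          rw [← mul_assoc, Matrix.mul_nonsing_inv _ hdetU, one_mul]
      _ = (1 + U).map (algebraMap ℝ ℂ) *ᵥ (M *ᵥ v) := by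
          rw [Matrix.map_mul, ← Matrix.mulVec_mulVec]
      _ = σ • ((1 + U).map (algebraMap ℝ ℂ) *ᵥ v) := by
          rw [hMv, Matrix.mulVec_smul]
  set t : ℂ := star v ⬝ᵥ v with htdef
  set p : ℂ := star v ⬝ᵥ (G.map (algebraMap ℝ ℂ) *ᵥ v) with hpdef
  set u : ℂ := star v ⬝ᵥ (U.map (algebraMap ℝ ℂ) *ᵥ v) with hudef
  set q : ℂ := star v ⬝ᵥ ((1 + U).map (algebraMap ℝ ℂ) *ᵥ v) with hqdef
  have hpq : p = σ * q := by
    rw [hpdef, hGv, dotProduct_smul, smul_eq_mul, hqdef]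
  have hqsplit : q = t + u := by
    rw [hqdef, map_one_add, Matrix.add_mulVec, Matrix.one_mulVec, dotProduct_add]
  have ht : 0 < t := Matrix.dotProduct_star_self_pos_iff.mpr hv0
  have htre : 0 < t.re ∧ t.im = 0 := by
    have := Complex.lt_def.mp ht; exact ⟨by simpa using this.1, by simpa using this.2.symm⟩
  have hu : 0 ≤ u := (psd_map hU).dotProduct_mulVec_nonneg v
  have hure : 0 ≤ u.re ∧ u.im = 0 := by
    have := Complex.le_def.mp hu; exact ⟨by simpa using this.1, by simpa using this.2.symm⟩
  have h1 : 0 < t - p := by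
    have := (posdef_map hP1).dotProduct_mulVec_pos hv0
    rwa [map_one_sub, Matrix.sub_mulVec, Matrix.one_mulVec, dotProduct_sub] at this
  have h2 : 0 < t + p := by
    have := (posdef_map hP2).dotProduct_mulVec_pos hv0
    rwa [map_one_add, Matrix.add_mulVec, Matrix.one_mulVec, dotProduct_add] at this
  have h1' := Complex.lt_def.mp h1
  have h2' := Complex.lt_def.mp h2
  simp only [Complex.sub_re, Complex.sub_im, Complex.add_re, Complex.add_im, Complex.zero_re,
    Complex.zero_im] at h1' h2'
  have hpim : p.im = 0 := by
    have := h1'.2; linarith [htre.2]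
  have hqre : 0 < q.re := by
    rw [hqsplit]; simp only [Complex.add_re]; linarith [htre.1, hure.1]
  have hqim : q.im = 0 := by
    rw [hqsplit]; simp only [Complex.add_im]; linarith [htre.2, hure.2]
  have hpre : p.re = σ.re * q.re := by
    rw [hpq]; simp [Complex.mul_re, hqim]
  have hpim' : (0:ℝ) = σ.im * q.re := by
    rw [← hpim, hpq]; simp [Complex.mul_im, hqim]
  have hσim : σ.im = 0 := by
    rcases mul_eq_zero.mp hpim'.symm with h | h
    · exact h
    · exact absurd h hqre.ne'
  have hb1 : p.re < t.re := by linarith [h1'.1, htre.2]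
  have hb2 : -t.re < p.re := by linarith [h2'.1, htre.2]
  have htq : t.re ≤ q.re := by
    rw [hqsplit]; simp only [Complex.add_re]; linarith [hure.1]
  refine ⟨hσim, ?_, ?_, ?_⟩
  · nlinarith [htre.1]
  · nlinarith [htre.1]
  · intro hGpsd
    have hp : 0 ≤ p := (psd_map hGpsd).dotProduct_mulVec_nonneg v
    have hpre0 : 0 ≤ p.re := (Complex.le_def.mp hp).1
    nlinarith

end Lemma44

end

/-- **Lemma 4.4(ii)**: for `U` symmetric positive semidefinite and `G` real symmetric with
eigenvalues in `(−1, 1)`, the matrix `WG` with `W = (Id + U)⁻¹` has only real eigenvalues,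
lying in `(−1, 1)`; if moreover `G` is positive semidefinite, they lie in `[0, 1)`. -/
theorem eigenvalues_of_WG {n : ℕ} (U G : Matrix (Fin n) (Fin n) ℝ)
    (hU : U.PosSemidef) (hG : G.IsHermitian)
    (hGspec : ∀ μ ∈ spectrum ℝ G, μ ∈ Set.Ioo (-1 : ℝ) 1) :
    (∀ σ ∈ spectrum ℂ (((1 + U)⁻¹ * G).map (algebraMap ℝ ℂ)),
      σ.im = 0 ∧ σ.re ∈ Set.Ioo (-1 : ℝ) 1) ∧
    (G.PosSemidef →
      ∀ σ ∈ spectrum ℂ (((1 + U)⁻¹ * G).map (algebraMap ℝ ℂ)),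
        σ.im = 0 ∧ σ.re ∈ Set.Ico (0 : ℝ) 1) := by
  constructor
  · intro σ hσ
    obtain ⟨him, h1, h2, _⟩ := Lemma44.key U G hU hG hGspec hσ
    exact ⟨him, h1, h2⟩
  · intro hGpsd σ hσ
    obtain ⟨him, h1, h2, h3⟩ := Lemma44.key U G hU hG hGspec hσ
    exact ⟨him, h3 hGpsd, h2⟩
end

section
/- Let G be a real symmetric n×n matrix, let a, b ∈ ℝ, and let M be the 2n×2n block matrix M = [[(a−b)·Id + (1+b)·G, −(a−b)·Id − b·G], [Id, 0]]. Then: (1) every eigenvector (r₁, r₂) of M over ℂ with eigenvalue σ satisfies r₁ = σ·r₂; (2) the spectrum of M over ℂ is exactly the set of complex roots σ of the quadratic σ² − ((a−b) + (1+b)η)·σ + (a−b) + b·η = 0 as η ranges over the eigenvalues of G. (Proposition 4.7(i).) -/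
open Matrix

lemma mem_spec_iff {m : Type*} [Fintype m] [DecidableEq m] (A : Matrix m m ℂ) (σ : ℂ) :
    σ ∈ spectrum ℂ A ↔ ∃ v, v ≠ 0 ∧ A.mulVec v = σ • v := by
  rw [spectrum.mem_iff]
  have h1 : (algebraMap ℂ (Matrix m m ℂ)) σ - A = σ • 1 - A := by
    simp [Algebra.algebraMap_eq_smul_one]
  rw [h1, Matrix.isUnit_iff_isUnit_det, isUnit_iff_ne_zero, not_not,
    ← Matrix.exists_mulVec_eq_zero_iff]
  constructor
  · rintro ⟨v, hv, h⟩
    refine ⟨v, hv, ?_⟩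
    rw [Matrix.sub_mulVec, Matrix.smul_mulVec, Matrix.one_mulVec, sub_eq_zero] at h
    exact h.symm
  · rintro ⟨v, hv, h⟩
    refine ⟨v, hv, ?_⟩
    rw [Matrix.sub_mulVec, Matrix.smul_mulVec, Matrix.one_mulVec, sub_eq_zero, h]

lemma spec_nonempty {m : Type*} [Fintype m] [DecidableEq m] [Nonempty m] (A : Matrix m m ℂ) :
    (spectrum ℂ A).Nonempty := by
  obtain ⟨μ, hμ⟩ := Module.End.exists_eigenvalue ((Matrix.toLinAlgEquiv (Pi.basisFun ℂ m)) A)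
  exact ⟨μ, by
    rwa [← AlgEquiv.spectrum_eq (Matrix.toLinAlgEquiv (Pi.basisFun ℂ m)),
      ← Module.End.hasEigenvalue_iff_mem_spectrum]⟩

/-- **Proposition 4.7(i)**: for the block matrix
`M = [[(a−b)·Id + (1+b)·G, −(a−b)·Id − b·G], [Id, 0]]`, every eigenvector `(r₁, r₂)` of `M`
with eigenvalue `σ` satisfies `r₁ = σ·r₂`, and the complex spectrum of `M` is exactly the
set of roots of `σ² − ((a−b) + (1+b)η)σ + (a−b) + bη = 0` as `η` runs over the eigenvalues
of `G`. -/
theorem block_matrix_spectrum {n : ℕ} (G : Matrix (Fin n) (Fin n) ℝ)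
    (hG : G.IsHermitian) (a b : ℝ)
    (M : Matrix (Fin n ⊕ Fin n) (Fin n ⊕ Fin n) ℝ)
    (hM : M = Matrix.fromBlocks
      ((a - b) • (1 : Matrix (Fin n) (Fin n) ℝ) + (1 + b) • G)
      (-((a - b) • (1 : Matrix (Fin n) (Fin n) ℝ)) - b • G)
      1 0) :
    (∀ (σ : ℂ) (v : Fin n ⊕ Fin n → ℂ), v ≠ 0 →
      (M.map (algebraMap ℝ ℂ)).mulVec v = σ • v →
      ∀ i, v (Sum.inl i) = σ * v (Sum.inr i)) ∧
    spectrum ℂ (M.map (algebraMap ℝ ℂ)) =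
      {σ : ℂ | ∃ η ∈ spectrum ℂ (G.map (algebraMap ℝ ℂ)),
        σ ^ 2 - (((a : ℂ) - (b : ℂ)) + (1 + (b : ℂ)) * η) * σ
          + (((a : ℂ) - (b : ℂ)) + (b : ℂ) * η) = 0} := by
  set Gc : Matrix (Fin n) (Fin n) ℂ := G.map (algebraMap ℝ ℂ) with hGc
  set Ac : Matrix (Fin n) (Fin n) ℂ :=
    ((a : ℂ) - b) • (1 : Matrix (Fin n) (Fin n) ℂ) + (1 + (b : ℂ)) • Gc with hAc
  set Bc : Matrix (Fin n) (Fin n) ℂ :=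
    -(((a : ℂ) - b) • (1 : Matrix (Fin n) (Fin n) ℂ)) - (b : ℂ) • Gc with hBc
  have hMc : M.map (algebraMap ℝ ℂ) = fromBlocks Ac Bc 1 0 := by
    subst hM
    ext i j
    rcases i with i | i <;> rcases j with j | j <;>
      simp [hAc, hBc, hGc, Matrix.map_apply, Matrix.one_apply, apply_ite] <;>
      split_ifs <;> push_cast <;> ring
  have key : ∀ (σ : ℂ) (v : Fin n ⊕ Fin n → ℂ), v ≠ 0 →
      (M.map (algebraMap ℝ ℂ)).mulVec v = σ • v →
      ∀ i, v (Sum.inl i) = σ * v (Sum.inr i) := by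
    intro σ v _ hEv i
    have h := congrFun hEv (Sum.inr i)
    rw [hMc] at h
    simpa [Matrix.mulVec, dotProduct, Fintype.sum_sum_type, Matrix.one_apply] using h
  refine ⟨key, ?_⟩
  ext σ
  simp only [Set.mem_setOf_eq]
  rw [mem_spec_iff]
  constructor
  · rintro ⟨v, hv, hEv⟩
    have h1 := key σ v hv hEv
    set r : Fin n → ℂ := v ∘ Sum.inr with hrdef
    have hr : r ≠ 0 := by
      intro h0
      apply hv
      funext i
      rcases i with i | i
      · rw [h1 i]
        have : r i = 0 := congrFun h0 i
        simp [hrdef] at this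
        simp [this]
      · exact congrFun h0 i
    have hv' : v = Sum.elim (σ • r) r := by
      funext i
      rcases i with i | i
      · simp [hrdef, h1 i]
      · simp [hrdef]
    rw [hMc, hv', fromBlocks_mulVec] at hEv
    have h2 : Ac *ᵥ (σ • r) + Bc *ᵥ r = σ • (σ • r) := by
      funext i
      have := congrFun hEv (Sum.inl i)
      simpa using this
    have h3 : ∀ i, ((1 + (b : ℂ)) * σ - b) * (Gc *ᵥ r) i
        = (σ ^ 2 - ((a : ℂ) - b) * σ + ((a : ℂ) - b)) * r i := by
      intro i
      have h := congrFun h2 i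
      simp only [hAc, hBc, Matrix.add_mulVec, Matrix.sub_mulVec, Matrix.neg_mulVec,
        Matrix.smul_mulVec, Matrix.one_mulVec, Matrix.mulVec_smul, Pi.add_apply,
        Pi.sub_apply, Pi.neg_apply, Pi.smul_apply, smul_eq_mul] at h
      linear_combination h
    by_cases hc : (1 + (b : ℂ)) * σ - b = 0
    · obtain ⟨i, hi⟩ : ∃ i, r i ≠ 0 := Function.ne_iff.1 hr
      have hd : σ ^ 2 - ((a : ℂ) - b) * σ + ((a : ℂ) - b) = 0 := by
        have := h3 i
        rw [hc, zero_mul] at this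
        rcases mul_eq_zero.1 this.symm with h | h
        · exact h
        · exact absurd h hi
      haveI : Nonempty (Fin n) := ⟨i⟩
      obtain ⟨η, hη⟩ := spec_nonempty Gc
      exact ⟨η, hη, by linear_combination hd - η * hc⟩
    · have hGr : Gc *ᵥ r = ((σ ^ 2 - ((a : ℂ) - b) * σ + ((a : ℂ) - b))
          / ((1 + (b : ℂ)) * σ - b)) • r := by
        funext i
        have := h3 i
        rw [Pi.smul_apply, smul_eq_mul, div_mul_eq_mul_div, eq_div_iff hc]
        linear_combination this
      refine ⟨_, (mem_spec_iff Gc _).2 ⟨r, hr, hGr⟩, ?_⟩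
      have hx := div_mul_cancel₀ (σ ^ 2 - ((a : ℂ) - b) * σ + ((a : ℂ) - b)) hc
      linear_combination (-1 : ℂ) * hx
  · rintro ⟨η, hη, hquad⟩
    obtain ⟨w, hw, hGw⟩ := (mem_spec_iff Gc η).1 hη
    refine ⟨Sum.elim (σ • w) w, ?_, ?_⟩
    · intro h0
      apply hw
      funext i
      exact congrFun h0 (Sum.inr i)
    · have hA : Ac *ᵥ w = (((a : ℂ) - b) + (1 + (b : ℂ)) * η) • w := by
        rw [hAc, Matrix.add_mulVec, Matrix.smul_mulVec, Matrix.smul_mulVec,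
          Matrix.one_mulVec, hGw]
        funext i
        simp
        ring
      have hB : Bc *ᵥ w = -(((a : ℂ) - b) + (b : ℂ) * η) • w := by
        rw [hBc, Matrix.sub_mulVec, Matrix.neg_mulVec, Matrix.smul_mulVec,
          Matrix.smul_mulVec, Matrix.one_mulVec, hGw]
        funext i
        simp
        ring
      rw [hMc, fromBlocks_mulVec]
      simp only [Sum.elim_comp_inl, Sum.elim_comp_inr]
      rw [Matrix.mulVec_smul, hA, hB]
      funext i
      rcases i with i | i
      · simp only [Sum.elim_inl, Pi.add_apply, Pi.smul_apply, smul_eq_mul, Pi.neg_apply]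
        linear_combination -(w i) * hquad
      · simp
end

section
/- Let M be a real m×m matrix with spectral radius ρ(M) < 1, and let (d_k) be a sequence in ℝ^m such that for every ε > 0 there exists K₀ with ‖d_{k+1} − M·d_k‖ ≤ ε‖d_k‖ for all k ≥ K₀ (i.e., d_{k+1} = M·d_k + o(‖d_k‖)). Then for every ρ ∈ (ρ(M), 1) there exist K ∈ ℕ and C > 0 such that ‖d_k‖ ≤ C·ρ^{k−K}·‖d_K‖ for all k ≥ K. (Linearization-to-linear-rate principle underlying Theorems 4.11 and 4.13.) -/
open Filter Topology Matrix

section Aux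

variable {m : ℕ}

/-- Coordinatewise inclusion of real Euclidean space into complex Euclidean space. -/
noncomputable def complexify (x : EuclideanSpace ℝ (Fin m)) : EuclideanSpace ℂ (Fin m) :=
  (WithLp.equiv 2 (Fin m → ℂ)).symm (fun i => (x i : ℂ))

lemma complexify_norm (x : EuclideanSpace ℝ (Fin m)) : ‖complexify x‖ = ‖x‖ := by
  rw [EuclideanSpace.norm_eq, EuclideanSpace.norm_eq]
  congr 1
  refine Finset.sum_congr rfl fun i _ => ?_
  simp [complexify]

lemma complexify_comm (M : Matrix (Fin m) (Fin m) ℝ) (x : EuclideanSpace ℝ (Fin m)) :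
    Matrix.toEuclideanCLM (𝕜 := ℂ) (M.map (algebraMap ℝ ℂ)) (complexify x)
      = complexify (Matrix.toEuclideanLin M x) := by
  apply (WithLp.equiv 2 (Fin m → ℂ)).injective
  rw [WithLp.equiv_apply, ofLp_toEuclideanCLM]
  ext i
  have h3 : (Matrix.toEuclideanLin M x) i = (M.mulVec (WithLp.equiv 2 _ x)) i := by
    rw [ofLp_toEuclideanLin_apply]; rfl
  simp only [complexify, WithLp.equiv_symm_apply, WithLp.equiv_apply, WithLp.ofLp_toLp,
    Matrix.toLin'_apply, h3]
  simp only [Matrix.mulVec, dotProduct, Matrix.map_apply, Complex.ofReal_sum,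
    Complex.ofReal_mul, algebraMap_apply]
  rfl

lemma complexify_pow_comm (M : Matrix (Fin m) (Fin m) ℝ) (j : ℕ) (x : EuclideanSpace ℝ (Fin m)) :
    (Matrix.toEuclideanCLM (𝕜 := ℂ) (M.map (algebraMap ℝ ℂ)) ^ j) (complexify x)
      = complexify ((Matrix.toEuclideanLin M ^ j) x) := by
  induction j generalizing x with
  | zero => simp
  | succ j ih =>
    have h1 : (Matrix.toEuclideanCLM (𝕜 := ℂ) (M.map (algebraMap ℝ ℂ)) ^ (j+1)) (complexify x)
        = (Matrix.toEuclideanCLM (𝕜 := ℂ) (M.map (algebraMap ℝ ℂ)) ^ j)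
            (Matrix.toEuclideanCLM (𝕜 := ℂ) (M.map (algebraMap ℝ ℂ)) (complexify x)) := by
      rw [pow_succ]; rfl
    have h2 : (Matrix.toEuclideanLin M ^ (j+1)) x
        = (Matrix.toEuclideanLin M ^ j) (Matrix.toEuclideanLin M x) := by
      rw [pow_succ]; rfl
    rw [h1, h2, complexify_comm, ih]

/-- Norm bound for real iterates via the complexified operator norm. -/
lemma pow_apply_norm_le (M : Matrix (Fin m) (Fin m) ℝ) (j : ℕ) (x : EuclideanSpace ℝ (Fin m)) :
    ‖(Matrix.toEuclideanLin M ^ j) x‖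
      ≤ ‖Matrix.toEuclideanCLM (𝕜 := ℂ) (M.map (algebraMap ℝ ℂ)) ^ j‖ * ‖x‖ := by
  rw [← complexify_norm ((Matrix.toEuclideanLin M ^ j) x), ← complexify_pow_comm,
    ← complexify_norm x]
  exact ContinuousLinearMap.le_opNorm _ _

end Aux

/-- **Linearization-to-linear-rate principle** underlying Theorems 4.11 and 4.13: if
`ρ(M) < 1` and `d_{k+1} = M d_k + o(‖d_k‖)`, then for every `ρ ∈ (ρ(M), 1)` the sequence
`(d_k)` eventually decays linearly at rate `ρ`. -/
theorem linear_rate_of_linearization {m : ℕ} (M : Matrix (Fin m) (Fin m) ℝ)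
    (hρM : spectralRadius ℂ (M.map (algebraMap ℝ ℂ)) < 1)
    (d : ℕ → EuclideanSpace ℝ (Fin m))
    (hlin : ∀ ε : ℝ, 0 < ε → ∃ K₀ : ℕ, ∀ k ≥ K₀,
      ‖d (k + 1) - Matrix.toEuclideanLin M (d k)‖ ≤ ε * ‖d k‖) :
    ∀ ρ : ℝ, spectralRadius ℂ (M.map (algebraMap ℝ ℂ)) < ENNReal.ofReal ρ → ρ < 1 →
      ∃ (K : ℕ) (C : ℝ), 0 < C ∧ ∀ k ≥ K, ‖d k‖ ≤ C * ρ ^ (k - K) * ‖d K‖ := by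
  intro ρ hρ hρ1
  have hρpos : 0 < ρ := by
    by_contra h
    push_neg at h
    rw [ENNReal.ofReal_eq_zero.mpr h] at hρ
    exact (not_lt.mpr zero_le) hρ
  rcases Nat.eq_zero_or_pos m with hm | hm
  · subst hm
    refine ⟨0, 1, one_pos, fun k _ => ?_⟩
    have h1 : d k = 0 := Subsingleton.elim _ _
    have h0 : d 0 = 0 := Subsingleton.elim _ _
    simp [h1, h0]
  haveI : Nonempty (Fin m) := ⟨⟨0, hm⟩⟩
  set T := Matrix.toEuclideanCLM (𝕜 := ℂ) (M.map (algebraMap ℝ ℂ)) with hTdef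
  have hspec : spectralRadius ℂ T = spectralRadius ℂ (M.map (algebraMap ℝ ℂ)) := by
    unfold spectralRadius
    rw [AlgEquiv.spectrum_eq (Matrix.toEuclideanCLM (𝕜 := ℂ) (n := Fin m))
      (M.map (algebraMap ℝ ℂ))]
  -- pick intermediate rates ρ₁ < ρ₂ < ρ
  obtain ⟨ρ₁, hρ₁0, hlt1, hlt2⟩ := ENNReal.lt_iff_exists_real_btwn.mp hρ
  have hρ₁ρ : ρ₁ < ρ := (ENNReal.ofReal_lt_ofReal_iff hρpos).mp hlt2
  set ρ₂ : ℝ := (ρ₁ + ρ) / 2 with hρ₂def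
  have hρ₁ρ₂ : ρ₁ < ρ₂ := by rw [hρ₂def]; linarith
  have hρ₂ρ : ρ₂ < ρ := by rw [hρ₂def]; linarith
  have hρ₂pos : 0 < ρ₂ := by rw [hρ₂def]; linarith
  -- Gelfand: get n with ‖T^n‖ ≤ ρ₁^n
  have hg := spectrum.pow_nnnorm_pow_one_div_tendsto_nhds_spectralRadius T
  rw [hspec] at hg
  obtain ⟨n, hgn, hn1⟩ := ((hg.eventually_lt_const hlt1).and (eventually_ge_atTop 1)).exists
  have hTn : ‖T ^ n‖ ≤ ρ₁ ^ n := by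
    have hn' : (n : ℝ) ≠ 0 := Nat.cast_ne_zero.mpr (by omega)
    have h2 := ENNReal.rpow_le_rpow hgn.le (Nat.cast_nonneg n : (0:ℝ) ≤ n)
    rw [← ENNReal.rpow_mul, one_div_mul_cancel hn', ENNReal.rpow_one,
      ENNReal.ofReal_rpow_of_nonneg hρ₁0 (Nat.cast_nonneg n), Real.rpow_natCast,
      ← enorm_eq_nnnorm, ← ofReal_norm] at h2
    exact (ENNReal.ofReal_le_ofReal_iff (pow_nonneg hρ₁0 n)).mp h2
  set L := Matrix.toEuclideanLin M with hLdef
  -- adapted norm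
  set N : EuclideanSpace ℝ (Fin m) → ℝ :=
    fun x => ∑ j ∈ Finset.range n, ρ₂⁻¹ ^ j * ‖(L ^ j) x‖ with hNdef
  have hterm_nonneg : ∀ (j : ℕ) x, 0 ≤ ρ₂⁻¹ ^ j * ‖(L ^ j) x‖ :=
    fun j x => mul_nonneg (pow_nonneg (inv_nonneg.mpr hρ₂pos.le) j) (norm_nonneg _)
  have hN1 : ∀ x, ‖x‖ ≤ N x := by
    intro x
    have h0 : (0 : ℕ) ∈ Finset.range n := Finset.mem_range.mpr (by omega)
    have := Finset.single_le_sum (f := fun j => ρ₂⁻¹ ^ j * ‖(L ^ j) x‖)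
      (fun j _ => hterm_nonneg j x) h0
    simpa only [pow_zero, one_mul, Module.End.one_apply] using this
  set c : ℝ := ∑ j ∈ Finset.range n, ρ₂⁻¹ ^ j * ‖T ^ j‖ with hcdef
  have hNc : ∀ x, N x ≤ c * ‖x‖ := by
    intro x
    rw [hcdef, Finset.sum_mul]
    refine Finset.sum_le_sum fun j _ => ?_
    rw [mul_assoc]
    exact mul_le_mul_of_nonneg_left (pow_apply_norm_le M j x)
      (pow_nonneg (inv_nonneg.mpr hρ₂pos.le) j)
  have hc1 : (1 : ℝ) ≤ c := by
    have h0 : (0 : ℕ) ∈ Finset.range n := Finset.mem_range.mpr (by omega)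
    have hle := Finset.single_le_sum (f := fun j => ρ₂⁻¹ ^ j * ‖T ^ j‖)
      (fun j _ => mul_nonneg (pow_nonneg (inv_nonneg.mpr hρ₂pos.le) j) (norm_nonneg _)) h0
    have hid : ‖T ^ 0‖ = 1 := by rw [pow_zero]; exact norm_one
    rw [hcdef]
    calc (1:ℝ) = ρ₂⁻¹ ^ 0 * ‖T ^ 0‖ := by rw [pow_zero, hid, one_mul]
      _ ≤ _ := hle
  have hcpos : 0 < c := lt_of_lt_of_le one_pos hc1
  -- subadditivity
  have hNadd : ∀ x y, N (x + y) ≤ N x + N y := by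
    intro x y
    rw [hNdef]
    simp only
    rw [← Finset.sum_add_distrib]
    refine Finset.sum_le_sum fun j _ => ?_
    rw [← mul_add]
    refine mul_le_mul_of_nonneg_left ?_ (pow_nonneg (inv_nonneg.mpr hρ₂pos.le) j)
    rw [map_add]
    exact norm_add_le _ _
  -- contraction
  have hNL : ∀ x, N (L x) ≤ ρ₂ * N x := by
    intro x
    have hrw : ∀ j, ρ₂⁻¹ ^ j * ‖(L ^ j) (L x)‖ = ρ₂ * (ρ₂⁻¹ ^ (j+1) * ‖(L ^ (j+1)) x‖) := by
      intro j
      have h1 : (L ^ j) (L x) = (L ^ (j+1)) x := by rw [pow_succ]; rfl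
      rw [h1, show ρ₂ * (ρ₂⁻¹ ^ (j+1) * ‖(L ^ (j+1)) x‖)
          = (ρ₂ * ρ₂⁻¹) * (ρ₂⁻¹ ^ j * ‖(L ^ (j+1)) x‖) from by rw [pow_succ]; ring,
        mul_inv_cancel₀ hρ₂pos.ne', one_mul]
    have hNLx : N (L x) = ρ₂ * ∑ j ∈ Finset.range n, ρ₂⁻¹ ^ (j+1) * ‖(L ^ (j+1)) x‖ := by
      rw [hNdef]
      simp only
      rw [Finset.mul_sum]
      exact Finset.sum_congr rfl fun j _ => hrw j
    rw [hNLx]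
    refine mul_le_mul_of_nonneg_left ?_ hρ₂pos.le
    have hshift : ∑ j ∈ Finset.range (n+1), ρ₂⁻¹ ^ j * ‖(L ^ j) x‖
        = (∑ j ∈ Finset.range n, ρ₂⁻¹ ^ (j+1) * ‖(L ^ (j+1)) x‖)
          + ρ₂⁻¹ ^ 0 * ‖(L ^ 0) x‖ := Finset.sum_range_succ' _ n
    have hsucc : ∑ j ∈ Finset.range (n+1), ρ₂⁻¹ ^ j * ‖(L ^ j) x‖
        = N x + ρ₂⁻¹ ^ n * ‖(L ^ n) x‖ := Finset.sum_range_succ _ n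
    have hfn : ρ₂⁻¹ ^ n * ‖(L ^ n) x‖ ≤ ‖x‖ := by
      have h1 : ‖(L ^ n) x‖ ≤ ρ₁ ^ n * ‖x‖ :=
        le_trans (pow_apply_norm_le M n x) (mul_le_mul_of_nonneg_right hTn (norm_nonneg _))
      have h2 : ρ₁ ^ n ≤ ρ₂ ^ n := pow_le_pow_left₀ hρ₁0 hρ₁ρ₂.le n
      calc ρ₂⁻¹ ^ n * ‖(L ^ n) x‖ ≤ ρ₂⁻¹ ^ n * (ρ₂ ^ n * ‖x‖) :=
            mul_le_mul_of_nonneg_left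
              (h1.trans (mul_le_mul_of_nonneg_right h2 (norm_nonneg _)))
              (pow_nonneg (inv_nonneg.mpr hρ₂pos.le) n)
        _ = ‖x‖ := by
            rw [← mul_assoc, inv_pow, inv_mul_cancel₀ (pow_ne_zero n hρ₂pos.ne'), one_mul]
    have h0term : ρ₂⁻¹ ^ 0 * ‖(L ^ 0) x‖ = ‖x‖ := by simp
    have : (∑ j ∈ Finset.range n, ρ₂⁻¹ ^ (j+1) * ‖(L ^ (j+1)) x‖)
        = N x + ρ₂⁻¹ ^ n * ‖(L ^ n) x‖ - ‖x‖ := by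
      rw [← hsucc, hshift, h0term]; ring
    rw [this]
    linarith
  -- perturbation step
  set ε : ℝ := (ρ - ρ₂) / c with hεdef
  have hεpos : 0 < ε := div_pos (by linarith) hcpos
  obtain ⟨K, hK⟩ := hlin ε hεpos
  have hstep : ∀ k ≥ K, N (d (k+1)) ≤ ρ * N (d k) := by
    intro k hk
    have hdecomp : d (k+1) = L (d k) + (d (k+1) - L (d k)) := by abel
    calc N (d (k+1)) = N (L (d k) + (d (k+1) - L (d k))) := by rw [← hdecomp]
      _ ≤ N (L (d k)) + N (d (k+1) - L (d k)) := hNadd _ _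
      _ ≤ ρ₂ * N (d k) + c * ‖d (k+1) - L (d k)‖ := add_le_add (hNL _) (hNc _)
      _ ≤ ρ₂ * N (d k) + c * (ε * ‖d k‖) := by
          refine add_le_add_right (mul_le_mul_of_nonneg_left ?_ hcpos.le) _
          exact hK k hk
      _ = ρ₂ * N (d k) + (ρ - ρ₂) * ‖d k‖ := by
          rw [hεdef]; field_simp
      _ ≤ ρ₂ * N (d k) + (ρ - ρ₂) * N (d k) := by
          refine add_le_add_right (mul_le_mul_of_nonneg_left (hN1 _) (by linarith)) _
      _ = ρ * N (d k) := by ring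
  have hiter : ∀ k ≥ K, N (d k) ≤ ρ ^ (k - K) * N (d K) := by
    intro k hk
    induction k, hk using Nat.le_induction with
    | base => simp
    | succ k hk ih =>
      have hsub : k + 1 - K = (k - K) + 1 := by omega
      calc N (d (k+1)) ≤ ρ * N (d k) := hstep k hk
        _ ≤ ρ * (ρ ^ (k - K) * N (d K)) := mul_le_mul_of_nonneg_left ih hρpos.le
        _ = ρ ^ ((k - K) + 1) * N (d K) := by ring
        _ = ρ ^ (k + 1 - K) * N (d K) := by rw [hsub]
  refine ⟨K, c, hcpos, fun k hk => ?_⟩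
  calc ‖d k‖ ≤ N (d k) := hN1 _
    _ ≤ ρ ^ (k - K) * N (d K) := hiter k hk
    _ ≤ ρ ^ (k - K) * (c * ‖d K‖) :=
        mul_le_mul_of_nonneg_left (hNc _) (pow_nonneg hρpos.le _)
    _ = c * ρ ^ (k - K) * ‖d K‖ := by ring
end

section
/- Fix η ∈ (0, 1). For a ∈ [0, 1], let r(a) denote the maximum modulus of the complex roots of the quadratic σ² − (1+a)·η·σ + a·η = 0. Then r attains its minimum over [0, 1] uniquely at a⋆ = (1 − √(1−η))²/η, and the minimum value is r(a⋆) = 1 − √(1−η). (Optimal inertial parameter and optimal local rate, equations (4.13)–(4.14).) -/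
set_option maxHeartbeats 1000000


/-- **Optimal inertial parameter and optimal local rate (equations (4.13)–(4.14))**:
for fixed `η ∈ (0,1)`, the maximal root modulus `r(a)` of `σ² − (1+a)ησ + aη = 0`
attains its minimum over `a ∈ [0,1]` uniquely at `a⋆ = (1 − √(1−η))²/η`, with minimum
value `1 − √(1−η)`. -/
theorem optimal_inertial_parameter (η : ℝ) (hη : η ∈ Set.Ioo (0 : ℝ) 1)
    (r : ℝ → ℝ)
    (hr : ∀ a ∈ Set.Icc (0 : ℝ) 1,
      IsGreatest {t : ℝ | ∃ z : ℂ,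
        z ^ 2 - (1 + (a : ℂ)) * (η : ℂ) * z + (a : ℂ) * (η : ℂ) = 0 ∧
        t = ‖z‖} (r a)) :
    (1 - Real.sqrt (1 - η)) ^ 2 / η ∈ Set.Icc (0 : ℝ) 1 ∧
    r ((1 - Real.sqrt (1 - η)) ^ 2 / η) = 1 - Real.sqrt (1 - η) ∧
    ∀ a ∈ Set.Icc (0 : ℝ) 1, a ≠ (1 - Real.sqrt (1 - η)) ^ 2 / η →
      r ((1 - Real.sqrt (1 - η)) ^ 2 / η) < r a := by
  obtain ⟨hη0, hη1⟩ := hη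
  set s := Real.sqrt (1 - η) with hs_def
  have h1η : (0:ℝ) ≤ 1 - η := by linarith
  have hs0 : (0:ℝ) ≤ s := Real.sqrt_nonneg _
  have hs2 : s ^ 2 = 1 - η := Real.sq_sqrt h1η
  have hsp : 0 < s := Real.sqrt_pos.mpr (by linarith)
  have hs1 : s < 1 := by nlinarith
  set A := (1 - s) ^ 2 / η with hA_def
  have hAη : A * η = (1 - s) ^ 2 := by
    rw [hA_def]; field_simp
  have hmem : A ∈ Set.Icc (0:ℝ) 1 := by
    constructor
    · positivity
    · rw [div_le_one hη0]; nlinarith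
  -- value at A
  have hval : r A = 1 - s := by
    obtain ⟨⟨z, hz, hez⟩, _⟩ := hr A hmem
    have hB : (1 + A) * η = 2 - 2 * s := by
      linear_combination hAη + hs2
    have hBc : (1 + (A:ℂ)) * (η:ℂ) = 2 - 2 * (s:ℂ) := by exact_mod_cast hB
    have hAc : (A:ℂ) * (η:ℂ) = (1 - (s:ℂ)) ^ 2 := by exact_mod_cast hAη
    have hz2 : (z - (1 - (s:ℂ))) ^ 2 = 0 := by
      linear_combination hz + z * hBc - hAc
    have hzz : z = ((1 - s : ℝ) : ℂ) := by
      have := sub_eq_zero.mp (pow_eq_zero_iff two_ne_zero |>.mp hz2)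
      rw [this]; push_cast; ring
    rw [hez, hzz, Complex.norm_real, Real.norm_eq_abs, abs_of_nonneg (by linarith)]
  refine ⟨hmem, hval, ?_⟩
  rintro a ⟨ha0, ha1⟩ hne
  rw [hval]
  -- produce a root of modulus > 1 - s
  have key : ∃ z : ℂ,
      (z ^ 2 - (1 + (a : ℂ)) * (η : ℂ) * z + (a : ℂ) * (η : ℂ) = 0 ∧
        1 - s < ‖z‖) := by
    rcases lt_or_gt_of_ne hne with hlt | hgt
    · -- a < A : real roots, larger root > 1 - s
      have h1 : η * a < (1 - s) ^ 2 := by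
        nlinarith [mul_lt_mul_of_pos_left hlt hη0, hAη]
      have h2 : η * a < (1 + s) ^ 2 := by nlinarith
      have hDpos : 0 < η ^ 2 * (1 + a) ^ 2 - 4 * a * η := by
        nlinarith [mul_pos (sub_pos.mpr h1) (sub_pos.mpr h2)]
      set d := Real.sqrt (η ^ 2 * (1 + a) ^ 2 - 4 * a * η) with hd_def
      have hd0 : 0 ≤ d := Real.sqrt_nonneg _
      have hd2 : d ^ 2 = η ^ 2 * (1 + a) ^ 2 - 4 * a * η := Real.sq_sqrt hDpos.le
      set x := ((1 + a) * η + d) / 2 with hx_def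
      have hxroot : x ^ 2 - (1 + a) * η * x + a * η = 0 := by
        rw [hx_def]; ring_nf; nlinarith [hd2]
      have hxgt : 1 - s < x := by
        have hc2 : (2 * (1 - s) - (1 + a) * η) ^ 2 < d ^ 2 := by
          nlinarith [mul_pos hsp (sub_pos.mpr h1)]
        have := lt_of_pow_lt_pow_left₀ 2 hd0 hc2
        rw [hx_def]; linarith
      refine ⟨((x : ℝ) : ℂ), ?_, ?_⟩
      · exact_mod_cast congrArg (fun t : ℝ => (t : ℂ)) hxroot
      · rw [Complex.norm_real, Real.norm_eq_abs]
        calc 1 - s < x := hxgt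
          _ ≤ |x| := le_abs_self x
    · -- a > A : complex roots of modulus sqrt (a η) > 1 - s
      have h1 : (1 - s) ^ 2 < η * a := by
        nlinarith [mul_lt_mul_of_pos_left hgt hη0, hAη]
      have h2 : η * a < (1 + s) ^ 2 := by nlinarith
      have hE : 0 < a * η - ((1 + a) * η / 2) ^ 2 := by
        nlinarith [mul_pos (sub_pos.mpr h1) (sub_pos.mpr h2)]
      set u := (1 + a) * η / 2 with hu_def
      set v := Real.sqrt (a * η - u ^ 2) with hv_def
      have hv2 : v ^ 2 = a * η - u ^ 2 := Real.sq_sqrt hE.le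
      have hv2c : (v : ℂ) ^ 2 = (a : ℂ) * (η : ℂ) - (u : ℂ) ^ 2 := by exact_mod_cast hv2
      have huc : (u : ℂ) = (1 + (a : ℂ)) * (η : ℂ) / 2 := by push_cast [hu_def]; ring
      refine ⟨(u : ℂ) + (v : ℂ) * Complex.I, ?_, ?_⟩
      · have hI : (Complex.I) ^ 2 = -1 := Complex.I_sq
        linear_combination (v : ℂ) ^ 2 * hI - hv2c +
          (2 * (u : ℂ) + 2 * (v:ℂ) * Complex.I) * huc
      · have habs : (‖(u : ℂ) + (v : ℂ) * Complex.I‖) ^ 2 = u ^ 2 + v ^ 2 := by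
          rw [Complex.sq_norm]
          simp [Complex.normSq_apply]
          ring
        have h3 : (1 - s) ^ 2 < (‖(u : ℂ) + (v : ℂ) * Complex.I‖) ^ 2 := by
          rw [habs]; nlinarith
        exact lt_of_pow_lt_pow_left₀ 2 (norm_nonneg _) h3
  obtain ⟨z, hz, hzgt⟩ := key
  calc 1 - s < ‖z‖ := hzgt
    _ ≤ r a := (hr a ⟨ha0, ha1⟩).2 ⟨z, hz, rfl⟩
end

section
/- Fix η ∈ (0, 1) and set a⋆ = (1 − √(1−η))²/η. For every a ∈ (a⋆, 1], the two roots of σ² − (1+a)·η·σ + a·η = 0 are non-real complex conjugates, each of modulus √(a·η); in particular, for a = 1 both roots have modulus √η, which is strictly larger than η. (Oscillation regime of inertial schemes and the local rate of FISTA, Section 4.4.) -/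
/-- **Oscillation regime of inertial schemes and local rate of FISTA (Section 4.4)**:
for `η ∈ (0,1)` and `a ∈ (a⋆, 1]` with `a⋆ = (1 − √(1−η))²/η`, the two roots of
`σ² − (1+a)ησ + aη = 0` are non-real complex conjugates of modulus `√(aη)`; in
particular for `a = 1` both roots have modulus `√η`, which is strictly larger than `η`. -/
theorem fista_oscillation_regime (η : ℝ) (hη : η ∈ Set.Ioo (0 : ℝ) 1) :
    (∀ a : ℝ, (1 - Real.sqrt (1 - η)) ^ 2 / η < a → a ≤ 1 →
      ∀ z : ℂ, z ^ 2 - (1 + (a : ℂ)) * (η : ℂ) * z + (a : ℂ) * (η : ℂ) = 0 →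
        z.im ≠ 0 ∧
        (starRingEnd ℂ z) ^ 2 - (1 + (a : ℂ)) * (η : ℂ) * (starRingEnd ℂ z)
          + (a : ℂ) * (η : ℂ) = 0 ∧
        ‖z‖ = Real.sqrt (a * η)) ∧
    (∀ z : ℂ, z ^ 2 - 2 * (η : ℂ) * z + (η : ℂ) = 0 →
      ‖z‖ = Real.sqrt η) ∧
    η < Real.sqrt η := by
  obtain ⟨hη0, hη1⟩ := hη
  have hs0 : (0:ℝ) < Real.sqrt (1 - η) := Real.sqrt_pos.2 (by linarith)
  have hs2 : Real.sqrt (1 - η) * Real.sqrt (1 - η) = 1 - η :=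
    Real.mul_self_sqrt (by linarith)
  have hs1 : Real.sqrt (1 - η) < 1 := by nlinarith
  set s := Real.sqrt (1 - η) with hs
  have main : ∀ a : ℝ, (1 - s) ^ 2 / η < a → a ≤ 1 →
      ∀ z : ℂ, z ^ 2 - (1 + (a : ℂ)) * (η : ℂ) * z + (a : ℂ) * (η : ℂ) = 0 →
        z.im ≠ 0 ∧
        (starRingEnd ℂ z) ^ 2 - (1 + (a : ℂ)) * (η : ℂ) * (starRingEnd ℂ z)
          + (a : ℂ) * (η : ℂ) = 0 ∧
        ‖z‖ = Real.sqrt (a * η) := by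
    intro a ha1 ha2 z hz
    have ha1' : (1 - s) ^ 2 < a * η := by
      have := (div_lt_iff₀ hη0).1 ha1; linarith
    have ha0 : 0 < a := by nlinarith
    have f1 : 0 < (1 + a) * s - (1 - a) := by nlinarith
    have f2 : 0 < (1 + a) * s + (1 - a) := by nlinarith
    have key : (1 + a) ^ 2 * η < 4 * a := by nlinarith [mul_pos f1 f2]
    have hre := congrArg Complex.re hz
    have him := congrArg Complex.im hz
    simp [pow_two, Complex.mul_re, Complex.mul_im] at hre him
    set x := z.re
    set y := z.im
    have hy : y ≠ 0 := by
      intro hy0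
      rw [hy0] at hre
      have h4 := sq_nonneg (2 * x - (1 + a) * η)
      nlinarith
    refine ⟨hy, ?_, ?_⟩
    · have := congrArg (starRingEnd ℂ) hz
      simpa using this
    · have hx : 2 * x - (1 + a) * η = 0 := by
        rcases mul_eq_zero.1 (by ring_nf at him ⊢; nlinarith [him] : y * (2 * x - (1 + a) * η) = 0) with h | h
        · exact absurd h hy
        · exact h
      have hnorm : x * x + y * y = a * η := by nlinarith
      rw [Complex.norm_def, Complex.normSq_apply]
      rw [hnorm]
  refine ⟨main, ?_, ?_⟩
  · intro z hz
    have halt : (1 - s) ^ 2 / η < 1 := by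
      rw [div_lt_iff₀ hη0]; nlinarith
    have := main 1 halt le_rfl z (by push_cast; linear_combination hz)
    simpa using this.2.2
  · have h := Real.sq_sqrt hη0.le
    nlinarith [Real.sqrt_pos.2 hη0]
end
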